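/- arXiv:1008.5265 — 8 statements merged into one kernel-verified Lean document; each statement's English description precedes it below -/
import Mathlib

section
/- Let p ∈ S^{2n+1} ⊂ ℂ^{n+1} and v ∈ T_p S^{2n+1}. Let γ_R(t) = p cos(‖v‖t) + (v/‖v‖) sin(‖v‖t) be the great circle with γ_R(0)=p, γ̇_R(0)=v, and let c = ⟨v, i·p⟩ (the real inner product of v with i·p). Then the curve γ(t) = e^{-ict} γ_R(t) is horizontal, i.e. ⟨γ̇(t), i·γ(t)⟩ = 0 for all t, where ⟨·,·⟩ denotes the real inner product on ℂ^{n+1} ≅ ℝ^{2n+2}. -/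
/-- Horizontality of the curve `γ(t) = e^{-ict} γ_R(t)` on the sphere `S^{2n+1} ⊂ ℂ^{n+1}`,
where `γ_R` is the great circle through `p` with velocity `v` and `c = ⟨v, i·p⟩` (real inner
product). -/
theorem sphere_geodesic_horizontal (n : ℕ) (p v : EuclideanSpace ℂ (Fin (n + 1)))
    (hp : ‖p‖ = 1) (htan : (inner ℂ v p : ℂ).re = 0)
    (c : ℝ) (hc : c = (inner ℂ v (Complex.I • p) : ℂ).re)
    (γR γ : ℝ → EuclideanSpace ℂ (Fin (n + 1)))
    (hγR : ∀ t, γR t = (Real.cos (‖v‖ * t) : ℂ) • p +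
      ((Real.sin (‖v‖ * t) / ‖v‖ : ℝ) : ℂ) • v)
    (hγ : ∀ t, γ t = Complex.exp (-(c * t) * Complex.I) • γR t) :
    ∀ t, (inner ℂ (deriv γ t) (Complex.I • γ t) : ℂ).re = 0 := by
  intro t
  set w := ‖v‖ with hwdef
  -- basic inner product facts
  set μ : ℂ := inner ℂ v p with hμdef
  set m : ℝ := μ.im with hmdef
  have hμ : μ = (m : ℂ) * Complex.I := by
    apply Complex.ext <;> simp [htan, hmdef]
  have hpv : (inner ℂ p v : ℂ) = -(m : ℂ) * Complex.I := by
    rw [← inner_conj_symm, ← hμdef, hμ]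
    simp [Complex.ext_iff]
  have hcval : c = -m := by
    rw [hc, inner_smul_right, ← hμdef]
    simp [Complex.mul_re, hmdef]
  have hpp : (inner ℂ p p : ℂ) = 1 := by
    rw [inner_self_eq_norm_sq_to_K, hp]; norm_num
  have hvv : (inner ℂ v v : ℂ) = (w : ℂ) ^ 2 := by
    rw [inner_self_eq_norm_sq_to_K, hwdef]
    rfl
  by_cases hv : v = 0
  · have hc0 : c = 0 := by simp [hc, hv]
    have hγconst : γ = fun _ => p := by
      funext s
      simp [hγ, hγR, hv, hc0, hwdef]
    rw [hγconst]
    simp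
  · have hw0 : w ≠ 0 := by simpa [hwdef] using hv
    have hwC : (w : ℂ) ≠ 0 := by exact_mod_cast hw0
    -- derivative of γR
    have hcos : HasDerivAt (fun s : ℝ => ((Real.cos (w * s) : ℝ) : ℂ))
        ((-(w * Real.sin (w * t)) : ℝ) : ℂ) t := by
      have h1 : HasDerivAt (fun s : ℝ => Real.cos (w * s)) (-(w * Real.sin (w * t))) t := by
        have h0 : HasDerivAt (fun s : ℝ => w * s) (w * 1) t := (hasDerivAt_id t).const_mul w
        have := (Real.hasDerivAt_cos (w * t)).comp t h0
        exact this.congr_deriv (by ring)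
      exact h1.ofReal_comp
    have hsin : HasDerivAt (fun s : ℝ => ((Real.sin (w * s) / w : ℝ) : ℂ))
        ((Real.cos (w * t) : ℝ) : ℂ) t := by
      have h1 : HasDerivAt (fun s : ℝ => Real.sin (w * s) / w) (Real.cos (w * t)) t := by
        have h0 : HasDerivAt (fun s : ℝ => w * s) (w * 1) t := (hasDerivAt_id t).const_mul w
        have := ((Real.hasDerivAt_sin (w * t)).comp t h0).div_const w
        exact this.congr_deriv (by field_simp)
      exact h1.ofReal_comp
    have hγRd : HasDerivAt γR
        (((-(w * Real.sin (w * t)) : ℝ) : ℂ) • p + ((Real.cos (w * t) : ℝ) : ℂ) • v) t := by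
      have heq : γR = fun s => ((Real.cos (w * s) : ℝ) : ℂ) • p +
          ((Real.sin (w * s) / w : ℝ) : ℂ) • v := funext hγR
      rw [heq]
      exact (hcos.smul_const p).add (hsin.smul_const v)
    -- derivative of the exponential factor
    have hid : HasDerivAt (fun s : ℝ => (s : ℂ)) 1 t := by
      simpa using (hasDerivAt_id t).ofReal_comp
    have h3 : HasDerivAt (fun s : ℝ => -((c : ℂ) * (s : ℂ)) * Complex.I)
        (-(c : ℂ) * Complex.I) t := by
      have := ((hid.const_mul ((c : ℂ))).neg).mul_const Complex.I
      simpa using this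
    have hEd := h3.cexp
    -- derivative of γ
    have hγd : HasDerivAt γ
        (Complex.exp (-((c : ℂ) * (t : ℂ)) * Complex.I) •
            (((-(w * Real.sin (w * t)) : ℝ) : ℂ) • p + ((Real.cos (w * t) : ℝ) : ℂ) • v) +
          (Complex.exp (-((c : ℂ) * (t : ℂ)) * Complex.I) * (-(c : ℂ) * Complex.I)) • γR t) t := by
      have heq : γ = fun s : ℝ => Complex.exp (-((c : ℂ) * (s : ℂ)) * Complex.I) • γR s := funext hγ
      rw [heq]
      exact hEd.smul hγRd
    set e : ℂ := Complex.exp (-((c : ℂ) * (t : ℂ)) * Complex.I) with hedef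
    have hee : (starRingEnd ℂ) e * e = 1 := by
      rw [hedef, ← Complex.exp_conj, ← Complex.exp_add]
      have : (starRingEnd ℂ) (-((c : ℂ) * (t : ℂ)) * Complex.I) +
          -((c : ℂ) * (t : ℂ)) * Complex.I = 0 := by
        simp [Complex.ext_iff]
      rw [this, Complex.exp_zero]
    set cs : ℝ := Real.cos (w * t) with hcsdef
    set sn : ℝ := Real.sin (w * t) with hsndef
    have pyth : sn ^ 2 + cs ^ 2 = 1 := Real.sin_sq_add_cos_sq _
    -- values of the two inner products
    set A : ℂ := inner ℂ (γR t) (γR t) with hAdef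
    set B : ℂ := inner ℂ ((((-(w * sn)) : ℝ) : ℂ) • p + ((cs : ℝ) : ℂ) • v) (γR t) with hBdef
    have hA : A = 1 := by
      rw [hAdef, hγR t]
      simp only [inner_add_left, inner_add_right, inner_smul_left, inner_smul_right,
        Complex.conj_ofReal, hpp, hvv, ← hμdef, hμ, hpv, ← hwdef, ← hcsdef, ← hsndef]
      push_cast
      field_simp
      linear_combination ((w : ℂ)) * (by
        exact_mod_cast congrArg (Complex.ofReal) pyth :
        ((sn : ℂ)) ^ 2 + ((cs : ℂ)) ^ 2 = 1)
    have hB : B = (m : ℂ) * Complex.I := by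
      rw [hBdef, hγR t]
      simp only [inner_add_left, inner_add_right, inner_smul_left, inner_smul_right,
        Complex.conj_ofReal, hpp, hvv, ← hμdef, hμ, hpv, ← hwdef, ← hcsdef, ← hsndef]
      push_cast
      field_simp
      linear_combination ((m : ℂ) * Complex.I) * (by
        exact_mod_cast congrArg (Complex.ofReal) pyth :
        ((sn : ℂ)) ^ 2 + ((cs : ℂ)) ^ 2 = 1)
    -- the main computation
    have key : (inner ℂ (deriv γ t) (Complex.I • γ t) : ℂ) = -(c : ℂ) * A + Complex.I * B := by
      rw [hγd.deriv, hγ t]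
      simp only [inner_add_left, inner_smul_left, inner_smul_right, map_mul, map_neg,
        Complex.conj_I, Complex.conj_ofReal, ← hedef, ← hwdef, ← hcsdef, ← hsndef,
        ← hAdef, ← hBdef]
      linear_combination ((c : ℂ) * A * Complex.I ^ 2 + Complex.I * B) * hee +
        ((c : ℂ) * A) * Complex.I_sq
    rw [key, hA, hB, hcval]
    simp [Complex.ext_iff]
end

section
/- Let p ∈ S^{2n+1} ⊂ ℂ^{n+1}, v ∈ T_p S^{2n+1}, γ_R(t) = p cos(‖v‖t) + (v/‖v‖) sin(‖v‖t), c = ⟨v, i·p⟩, and γ(t) = e^{-ict} γ_R(t). Then ‖γ̇(t)‖² + c² = ‖v‖² for all t; in particular the speed of γ is constant. -/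
/-- Pythagoras-type relation for sub-Riemannian geodesics on `S^{2n+1}`:
`‖γ̇(t)‖² + c² = ‖v‖²` for all `t`, where `c = ⟨v, i·p⟩`; in particular the speed is constant. -/
theorem sphere_geodesic_speed (n : ℕ) (p v : EuclideanSpace ℂ (Fin (n + 1)))
    (hp : ‖p‖ = 1) (htan : (inner ℂ v p : ℂ).re = 0)
    (c : ℝ) (hc : c = (inner ℂ v (Complex.I • p) : ℂ).re)
    (γR γ : ℝ → EuclideanSpace ℂ (Fin (n + 1)))
    (hγR : ∀ t, γR t = (Real.cos (‖v‖ * t) : ℂ) • p +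
      ((Real.sin (‖v‖ * t) / ‖v‖ : ℝ) : ℂ) • v)
    (hγ : ∀ t, γ t = Complex.exp (-(c * t) * Complex.I) • γR t) :
    ∀ t, ‖deriv γ t‖ ^ 2 + c ^ 2 = ‖v‖ ^ 2 := by
  -- key inner product facts
  have ha : (inner ℂ v p : ℂ) = -(c : ℂ) * Complex.I := by
    have h2 : (inner ℂ v (Complex.I • p) : ℂ) = Complex.I * inner ℂ v p := inner_smul_right _ _ _
    apply Complex.ext
    · simpa using htan
    · have := hc
      rw [h2] at this
      simp [Complex.mul_re, htan] at this
      simp [this]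
  intro t
  by_cases hv : v = 0
  · subst hv
    have hc0 : c = 0 := by simpa using hc
    have hgconst : γ = fun _ => p := by
      funext s
      rw [hγ, hγR, hc0]
      simp
    rw [hgconst]
    simp [deriv_const, hc0]
  · have hV : ‖v‖ ≠ 0 := norm_ne_zero_iff.mpr hv
    set V := ‖v‖ with hVdef
    -- derivative computation
    have hofReal : ∀ x : ℝ, HasDerivAt (fun s : ℝ => ((s : ℝ) : ℂ)) 1 x := by
      intro x
      simpa using (hasDerivAt_id x).ofReal_comp
    have hexp : HasDerivAt (fun s : ℝ => Complex.exp (-(↑c * ↑s) * Complex.I))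
        (Complex.exp (-(↑c * ↑t) * Complex.I) * (-(c : ℂ) * Complex.I)) t := by
      have h1 : HasDerivAt (fun s : ℝ => -(↑c * (s : ℂ)) * Complex.I) (-(c : ℂ) * Complex.I) t := by
        simpa using (((hofReal t).const_mul (c : ℂ)).neg.mul_const Complex.I)
      exact h1.cexp
    have hcos : HasDerivAt (fun s : ℝ => ((Real.cos (V * s) : ℝ) : ℂ))
        ((-Real.sin (V * t) * V : ℝ) : ℂ) t := by
      have h1 : HasDerivAt (fun s : ℝ => V * s) V t := by
        simpa using (hasDerivAt_id t).const_mul V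
      exact ((Real.hasDerivAt_cos (V * t)).comp t h1).ofReal_comp
    have hsin : HasDerivAt (fun s : ℝ => ((Real.sin (V * s) / V : ℝ) : ℂ))
        ((Real.cos (V * t) * V / V : ℝ) : ℂ) t := by
      have h1 : HasDerivAt (fun s : ℝ => V * s) V t := by
        simpa using (hasDerivAt_id t).const_mul V
      exact (((Real.hasDerivAt_sin (V * t)).comp t h1).div_const V).ofReal_comp
    have hγRd : HasDerivAt (fun s : ℝ => (Real.cos (V * s) : ℂ) • p +
        ((Real.sin (V * s) / V : ℝ) : ℂ) • v)
        (((-Real.sin (V * t) * V : ℝ) : ℂ) • p + ((Real.cos (V * t) * V / V : ℝ) : ℂ) • v) t :=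
      (hcos.smul_const p).add (hsin.smul_const v)
    have hgfun : γ = fun s : ℝ => Complex.exp (-(↑c * ↑s) * Complex.I) •
        ((Real.cos (V * s) : ℂ) • p + ((Real.sin (V * s) / V : ℝ) : ℂ) • v) := by
      funext s
      rw [hγ, hγR]
    have hD : HasDerivAt γ
        (Complex.exp (-(↑c * ↑t) * Complex.I) •
          (((-Real.sin (V * t) * V : ℝ) : ℂ) • p + ((Real.cos (V * t) * V / V : ℝ) : ℂ) • v) +
         (Complex.exp (-(↑c * ↑t) * Complex.I) * (-(c : ℂ) * Complex.I)) •
          ((Real.cos (V * t) : ℂ) • p + ((Real.sin (V * t) / V : ℝ) : ℂ) • v)) t := by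
      rw [hgfun]
      exact hexp.smul hγRd
    rw [hD.deriv]
    -- factor out the exponential
    set e := Complex.exp (-(↑c * ↑t) * Complex.I) with he
    set A : ℂ := ((-Real.sin (V * t) * V : ℝ) : ℂ) + (-(c : ℂ) * Complex.I) * (Real.cos (V * t) : ℂ) with hA
    set B : ℂ := ((Real.cos (V * t) * V / V : ℝ) : ℂ) + (-(c : ℂ) * Complex.I) * ((Real.sin (V * t) / V : ℝ) : ℂ) with hB
    have hfactor : e • (((-Real.sin (V * t) * V : ℝ) : ℂ) • p + ((Real.cos (V * t) * V / V : ℝ) : ℂ) • v) +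
        (e * (-(c : ℂ) * Complex.I)) •
          ((Real.cos (V * t) : ℂ) • p + ((Real.sin (V * t) / V : ℝ) : ℂ) • v)
        = e • (A • p + B • v) := by
      rw [hA, hB]
      simp only [smul_add, smul_smul, add_smul]
      module
    rw [hfactor]
    have hne : ‖e • (A • p + B • v)‖ = ‖A • p + B • v‖ := by
      rw [norm_smul, he]
      simp [Complex.norm_exp]
    rw [hne]
    -- norm squared via inner product
    have hnormsq : ‖A • p + B • v‖ ^ 2 = RCLike.re (inner ℂ (A • p + B • v) (A • p + B • v) : ℂ) :=
      (inner_self_eq_norm_sq _).symm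
    rw [hnormsq, RCLike.re_to_complex]
    have hpp : (inner ℂ p p : ℂ) = 1 := by
      rw [inner_self_eq_norm_sq_to_K, hp]; norm_num
    have hvv : (inner ℂ v v : ℂ) = ((V ^ 2 : ℝ) : ℂ) := by
      rw [inner_self_eq_norm_sq_to_K]
      norm_cast
    have hpv : (inner ℂ p v : ℂ) = (c : ℂ) * Complex.I := by
      rw [← inner_conj_symm, ha]
      simp [map_mul]
    have hexpand : (inner ℂ (A • p + B • v) (A • p + B • v) : ℂ)
        = (starRingEnd ℂ) A * A + (starRingEnd ℂ) A * B * ((c : ℂ) * Complex.I)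
          + (starRingEnd ℂ) B * A * (-(c : ℂ) * Complex.I) + (starRingEnd ℂ) B * B * ((V ^ 2 : ℝ) : ℂ) := by
      rw [inner_add_add_self, inner_smul_left, inner_smul_left, inner_smul_left, inner_smul_left,
        inner_smul_right, inner_smul_right, inner_smul_right, inner_smul_right,
        hpp, hvv, hpv, ha]
      ring
    rw [hexpand]
    rw [hA, hB]
    have hVcancel : Real.cos (V * t) * V / V = Real.cos (V * t) := by field_simp
    rw [hVcancel]
    have hs2 : Real.sin (V * t) ^ 2 + Real.cos (V * t) ^ 2 = 1 := Real.sin_sq_add_cos_sq _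
    set s := Real.sin (V * t)
    set co := Real.cos (V * t)
    simp only [map_add, map_mul, map_neg, Complex.conj_ofReal, Complex.conj_I]
    simp [Complex.add_re, Complex.mul_re, Complex.mul_im, Complex.ofReal_re, Complex.ofReal_im,
      Complex.I_re, Complex.I_im, Complex.neg_re, Complex.neg_im]
    field_simp
    simp only [← Complex.ofReal_pow, Complex.ofReal_re]
    ring_nf
    linear_combination (V ^ 4 - c ^ 2 * V ^ 2) * hs2
end

section
/- Let p ∈ S^{2n+1} ⊂ ℂ^{n+1} and v ∈ T_p S^{2n+1} with c := ⟨v, i·p⟩ and ‖v‖² = 1 + c² (arc-length parametrization). Then the curve γ(t) = e^{-ict}(p cos(‖v‖t) + (v/‖v‖) sin(‖v‖t)) is periodic (there exists T > 0 with γ(t+T) = γ(t) for all t) if and only if c/√(1+c²) is rational. -/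
/-- Closedness criterion for sub-Riemannian geodesics on `S^{2n+1}`: an arc-length
parameterized geodesic `γ(t) = e^{-ict} γ_R(t)` is periodic iff `c/√(1+c²)` is rational. -/
theorem sphere_geodesic_closed_iff (n : ℕ) (p v : EuclideanSpace ℂ (Fin (n + 1)))
    (hp : ‖p‖ = 1) (htan : (inner ℂ v p : ℂ).re = 0)
    (c : ℝ) (hc : c = (inner ℂ v (Complex.I • p) : ℂ).re)
    (harc : ‖v‖ ^ 2 = 1 + c ^ 2)
    (γ : ℝ → EuclideanSpace ℂ (Fin (n + 1)))
    (hγ : ∀ t, γ t = Complex.exp (-(c * t) * Complex.I) •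
      ((Real.cos (‖v‖ * t) : ℂ) • p + ((Real.sin (‖v‖ * t) / ‖v‖ : ℝ) : ℂ) • v)) :
    (∃ T > 0, ∀ t, γ (t + T) = γ t) ↔ ∃ q : ℚ, c / Real.sqrt (1 + c ^ 2) = q := by
  set ω := ‖v‖ with hωdef
  have hω2 : ω ^ 2 = 1 + c ^ 2 := harc
  have hωpos : 0 < ω := by
    nlinarith [sq_nonneg c, norm_nonneg v]
  have hsqrt : Real.sqrt (1 + c ^ 2) = ω := by
    rw [← hω2, Real.sqrt_sq hωpos.le]
  -- `⟪v, p⟫ = -c * I`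
  have hvp : (inner ℂ v p : ℂ) = -c * Complex.I := by
    have h1 : (inner ℂ v (Complex.I • p) : ℂ) = Complex.I * inner ℂ v p := inner_smul_right _ _ _
    have h2 : c = -(inner ℂ v p : ℂ).im := by
      rw [hc, h1, Complex.mul_re, Complex.I_re, Complex.I_im]; ring
    apply Complex.ext
    · rw [htan]; simp
    · have : (inner ℂ v p : ℂ).im = -c := by linarith [h2]
      rw [this]; simp
  have hpv : (inner ℂ p v : ℂ) = c * Complex.I := by
    have h := inner_conj_symm (𝕜 := ℂ) p v
    rw [hvp] at h
    rw [← h]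
    simp [Complex.ext_iff]
  have hpp : (inner ℂ p p : ℂ) = 1 := by
    rw [inner_self_eq_norm_sq_to_K, hp]; norm_num
  have hvv : (inner ℂ v v : ℂ) = (ω : ℂ) ^ 2 := by
    rw [inner_self_eq_norm_sq_to_K, hωdef]
    norm_num
  constructor
  · rintro ⟨T, hT, hper⟩
    have hγ0 : γ 0 = p := by
      rw [hγ 0]; simp
    have hE : γ (0 + T) = γ 0 := hper 0
    rw [hγ0, zero_add, hγ T] at hE
    set e := Complex.exp (-(c * T) * Complex.I) with he
    set cs := Real.cos (ω * T) with hcs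
    set sn := Real.sin (ω * T) with hsn
    have hene : e ≠ 0 := Complex.exp_ne_zero _
    -- take inner products with `p` and `v`
    have E1 : e * ((cs : ℂ) * 1 + ((sn / ω : ℝ) : ℂ) * (c * Complex.I)) = 1 := by
      have h := congrArg (fun w => (inner ℂ p w : ℂ)) hE
      simp only [inner_smul_right, inner_add_right, hpp, hpv] at h
      linear_combination h
    have E2 : e * ((cs : ℂ) * (-c * Complex.I) + ((sn / ω : ℝ) : ℂ) * (ω : ℂ) ^ 2) =
        -c * Complex.I := by
      have h := congrArg (fun w => (inner ℂ v w : ℂ)) hE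
      simp only [inner_smul_right, inner_add_right, hvp, hvv] at h
      linear_combination h
    have hω2' : (ω : ℂ) ^ 2 = 1 + (c : ℂ) ^ 2 := by exact_mod_cast hω2
    set u := sn / ω with hu
    -- the combination kills everything except the `sin` coefficient
    have hu0 : (u : ℂ) * e = 0 := by
      linear_combination Complex.I * (c : ℂ) * E1 + E2 - e * (u : ℂ) * hω2'
        - e * (u : ℂ) * (c : ℂ) ^ 2 * Complex.I_sq
    have hu0' : u = 0 := by
      rcases mul_eq_zero.mp hu0 with h | h
      · exact_mod_cast h
      · exact absurd h hene
    have hsn0 : sn = 0 := by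
      have h : sn = u * ω := by rw [hu]; field_simp
      rw [h, hu0', zero_mul]
    -- hence `e * cs = 1` with `cs = ±1`, so `e` is real
    have E1' : e * (cs : ℂ) = 1 := by
      rw [hu0'] at E1
      simpa using E1
    have hcs2 : cs ^ 2 = 1 := by
      have h := Real.sin_sq_add_cos_sq (ω * T)
      rw [← hsn, ← hcs, hsn0] at h
      nlinarith
    have hecs : e = (cs : ℂ) := by
      have h2 : (cs : ℂ) ^ 2 = 1 := by exact_mod_cast hcs2
      calc e = e * (cs : ℂ) * (cs : ℂ) := by rw [mul_assoc, ← sq, h2, mul_one]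
        _ = (cs : ℂ) := by rw [E1', one_mul]
    -- imaginary part: sin (c*T) = 0
    have hsinc : Real.sin (c * T) = 0 := by
      have h1 : e = Complex.exp (((-(c * T) : ℝ) : ℂ) * Complex.I) := by
        rw [he]; push_cast; ring_nf
      have h2 : e.im = Real.sin (-(c * T)) := by
        rw [h1, Complex.exp_ofReal_mul_I_im]
      rw [hecs] at h2
      simp only [Complex.ofReal_im] at h2
      rw [Real.sin_neg] at h2
      linarith
    obtain ⟨m, hm⟩ := Real.sin_eq_zero_iff.mp hsinc
    obtain ⟨k, hk⟩ := Real.sin_eq_zero_iff.mp (hsn ▸ hsn0)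
    have hπ := Real.pi_pos
    have hkpos : 0 < (k : ℝ) := by
      by_contra h
      push_neg at h
      nlinarith [mul_pos hωpos hT]
    refine ⟨(m : ℚ) / (k : ℚ), ?_⟩
    rw [hsqrt]
    have hk0 : (k : ℝ) ≠ 0 := ne_of_gt hkpos
    push_cast
    rw [div_eq_div_iff hωpos.ne' hk0]
    have h2 : c * (k : ℝ) * T = (m : ℝ) * ω * T := by
      have h1 : c * T * (k : ℝ) = (m : ℝ) * (ω * T) := by
        rw [← hm, ← hk]; ring
      linear_combination h1
    exact mul_right_cancel₀ (ne_of_gt hT) h2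
  · rintro ⟨q, hq⟩
    rw [hsqrt] at hq
    have hcq : c = (q : ℝ) * ω := (div_eq_iff hωpos.ne').mp hq
    have hdenpos : (0 : ℝ) < (q.den : ℝ) := by exact_mod_cast q.pos
    have hπ := Real.pi_pos
    set T := 2 * Real.pi * (q.den : ℝ) / ω with hTdef
    have hTpos : 0 < T := by
      apply div_pos _ hωpos
      nlinarith
    refine ⟨T, hTpos, fun t => ?_⟩
    have hnum : (q : ℝ) * (q.den : ℝ) = (q.num : ℝ) := by exact_mod_cast Rat.mul_den_eq_num q
    have hωT : ω * T = (q.den : ℝ) * (2 * Real.pi) := by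
      rw [hTdef]; field_simp
    have hcT : c * T = (q.num : ℝ) * (2 * Real.pi) := by
      rw [hTdef, hcq]
      field_simp
      linear_combination hnum
    have hcos : Real.cos (ω * (t + T)) = Real.cos (ω * t) := by
      have h : ω * (t + T) = ω * t + ((q.den : ℤ) : ℝ) * (2 * Real.pi) := by
        push_cast
        linear_combination hωT
      rw [h, Real.cos_add_int_mul_two_pi]
    have hsin : Real.sin (ω * (t + T)) = Real.sin (ω * t) := by
      have h : ω * (t + T) = ω * t + ((q.den : ℤ) : ℝ) * (2 * Real.pi) := by
        push_cast
        linear_combination hωT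
      rw [h, Real.sin_add_int_mul_two_pi]
    have hexp : Complex.exp (-((c : ℂ) * ((t + T : ℝ) : ℂ)) * Complex.I) =
        Complex.exp (-((c : ℂ) * ((t : ℝ) : ℂ)) * Complex.I) := by
      have hcT' : (c : ℂ) * (T : ℝ) = ((q.num : ℝ) : ℂ) * (2 * (Real.pi : ℝ)) := by
        exact_mod_cast congrArg (Complex.ofReal) hcT
      have h : -((c : ℂ) * ((t + T : ℝ) : ℂ)) * Complex.I =
          -((c : ℂ) * ((t : ℝ) : ℂ)) * Complex.I + ((-q.num : ℤ) : ℂ) * (2 * (Real.pi : ℝ) * Complex.I) := by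
        push_cast
        push_cast at hcT'
        linear_combination (-Complex.I) * hcT'
      rw [h, Complex.exp_add, Complex.exp_int_mul_two_pi_mul_I, mul_one]
    rw [hγ, hγ]
    rw [hcos, hsin, hexp]
end

section
/- Let p = (1,0,0,0) ∈ S³ ⊂ ℝ⁴ ≅ ℂ², v = (0, v_{y₁}, v_{x₂}, v_{y₂}) with v_{x₂}² + v_{y₂}² = 1, and let γ(t) = e^{-i v_{y₁} t}·(p cos(‖v‖t) + (v/‖v‖) sin(‖v‖t)) (scalar multiplication by the unit complex number acting componentwise on ℂ²). Then γ is parameterized by arc length: ‖γ̇(t)‖ = 1 for all t. -/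
open Complex Real

/-- The sub-Riemannian geodesic of `S³ ⊂ ℂ²` starting at `p = (1,0)` with great-circle
initial velocity `v = (i v_{y₁}, v_{x₂} + i v_{y₂})`, with `v_{x₂}² + v_{y₂}² = 1`, is
parameterized by arc length: `‖γ̇(t)‖ = 1` for all `t`. -/
theorem s3_geodesic_arclength (vy1 vx2 vy2 : ℝ) (hunit : vx2 ^ 2 + vy2 ^ 2 = 1)
    (p v : EuclideanSpace ℂ (Fin 2))
    (hp : p = !₂[1, 0])
    (hv : v = !₂[Complex.I * vy1, vx2 + Complex.I * vy2])
    (γ : ℝ → EuclideanSpace ℂ (Fin 2))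
    (hγ : ∀ t, γ t = Complex.exp (-(vy1 * t) * Complex.I) •
      ((Real.cos (‖v‖ * t) : ℂ) • p + ((Real.sin (‖v‖ * t) / ‖v‖ : ℝ) : ℂ) • v)) :
    ∀ t, ‖deriv γ t‖ = 1 := by
  intro t
  set ω := ‖v‖ with hω
  -- ‖v‖² = vy1² + 1
  have hω2 : ω ^ 2 = vy1 ^ 2 + 1 := by
    have h1 : ω = Real.sqrt (∑ i : Fin 2, ‖v i‖ ^ 2) := by
      rw [hω]; exact EuclideanSpace.norm_eq v
    rw [h1, Real.sq_sqrt (by positivity)]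
    rw [hv]
    simp only [Fin.sum_univ_two, PiLp.toLp_apply, Matrix.cons_val_zero, Matrix.cons_val_one, Matrix.head_cons]
    rw [show ‖Complex.I * (vy1 : ℂ)‖ ^ 2 = vy1 ^ 2 by
      rw [norm_mul, Complex.norm_I, one_mul, Complex.norm_real, Real.norm_eq_abs,
        _root_.sq_abs]]
    rw [show ‖(vx2 : ℂ) + Complex.I * (vy2 : ℂ)‖ ^ 2 = vx2 ^ 2 + vy2 ^ 2 by
      rw [Complex.sq_norm, Complex.normSq_apply]
      simp
      ring]
    linarith
  have hωpos : 0 < ω := by nlinarith [norm_nonneg v]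
  have hωne : ω ≠ 0 := ne_of_gt hωpos
  -- build the derivative
  have hcr : HasDerivAt (fun s : ℝ => Real.cos (ω * s)) (-Real.sin (ω * t) * ω) t := by
    simpa [Function.comp_def] using (Real.hasDerivAt_cos (ω * t)).comp t ((hasDerivAt_id t).const_mul ω)
  have hsr : HasDerivAt (fun s : ℝ => Real.sin (ω * s) / ω) (Real.cos (ω * t)) t := by
    have h := ((Real.hasDerivAt_sin (ω * t)).comp t ((hasDerivAt_id t).const_mul ω)).div_const ω
    simpa [Function.comp_def, mul_comm, mul_div_assoc, mul_div_cancel_left₀ _ hωne] using h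
  have hc : HasDerivAt (fun s : ℝ => ((Real.cos (ω * s) : ℝ) : ℂ))
      ((-Real.sin (ω * t) * ω : ℝ) : ℂ) t := hcr.ofReal_comp
  have hs : HasDerivAt (fun s : ℝ => ((Real.sin (ω * s) / ω : ℝ) : ℂ))
      ((Real.cos (ω * t) : ℝ) : ℂ) t := hsr.ofReal_comp
  have hid : HasDerivAt (fun s : ℝ => ((s : ℝ) : ℂ)) 1 t := by
    simpa using (hasDerivAt_id t).ofReal_comp
  have hlin : HasDerivAt (fun s : ℝ => -((vy1 : ℂ) * (s : ℂ)) * Complex.I)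
      (-(vy1 : ℂ) * Complex.I) t := by
    simpa using ((hid.const_mul (vy1 : ℂ)).neg).mul_const Complex.I
  have he : HasDerivAt (fun s : ℝ => Complex.exp (-((vy1 : ℂ) * (s : ℂ)) * Complex.I))
      (Complex.exp (-((vy1 : ℂ) * (t : ℂ)) * Complex.I) * (-(vy1 : ℂ) * Complex.I)) t :=
    hlin.cexp
  have hF : HasDerivAt (fun s : ℝ => (Real.cos (ω * s) : ℂ) • p +
      ((Real.sin (ω * s) / ω : ℝ) : ℂ) • v)
      (((-Real.sin (ω * t) * ω : ℝ) : ℂ) • p + ((Real.cos (ω * t) : ℝ) : ℂ) • v) t :=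
    (hc.smul_const p).add (hs.smul_const v)
  set E := Complex.exp (-((vy1 : ℂ) * (t : ℂ)) * Complex.I) with hE
  have hγ' : HasDerivAt γ
      (E • (((-Real.sin (ω * t) * ω : ℝ) : ℂ) • p + ((Real.cos (ω * t) : ℝ) : ℂ) • v) +
       (E * (-(vy1 : ℂ) * Complex.I)) •
        ((Real.cos (ω * t) : ℂ) • p + ((Real.sin (ω * t) / ω : ℝ) : ℂ) • v)) t := by
    have h := he.smul hF
    have hfun : γ = fun s : ℝ => Complex.exp (-((vy1 : ℂ) * (s : ℂ)) * Complex.I) •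
        ((Real.cos (ω * s) : ℂ) • p + ((Real.sin (ω * s) / ω : ℝ) : ℂ) • v) :=
      funext hγ
    rw [hfun]
    exact h
  rw [hγ'.deriv]
  have hfac : E • (((-Real.sin (ω * t) * ω : ℝ) : ℂ) • p + ((Real.cos (ω * t) : ℝ) : ℂ) • v) +
       (E * (-(vy1 : ℂ) * Complex.I)) •
        ((Real.cos (ω * t) : ℂ) • p + ((Real.sin (ω * t) / ω : ℝ) : ℂ) • v)
      = E • ((((-Real.sin (ω * t) * ω : ℝ) : ℂ) • p + ((Real.cos (ω * t) : ℝ) : ℂ) • v) +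
        (-(vy1 : ℂ) * Complex.I) •
          ((Real.cos (ω * t) : ℂ) • p + ((Real.sin (ω * t) / ω : ℝ) : ℂ) • v)) := by
    rw [mul_smul, ← smul_add]
  rw [hfac, norm_smul]
  have hEnorm : ‖E‖ = 1 := by
    rw [hE, Complex.norm_exp]
    simp
  rw [hEnorm, one_mul]
  set c := Real.cos (ω * t) with hcdef
  set sn := Real.sin (ω * t) with hsdef
  have hpyth : sn ^ 2 + c ^ 2 = 1 := Real.sin_sq_add_cos_sq (ω * t)
  rw [hp, hv, EuclideanSpace.norm_eq]
  simp only [Fin.sum_univ_two, PiLp.add_apply, PiLp.smul_apply, PiLp.toLp_apply, Matrix.cons_val_zero,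
    Matrix.cons_val_one, Matrix.head_cons, smul_eq_mul]
  have hz0 : ((-sn * ω : ℝ) : ℂ) * 1 + (c : ℂ) * (Complex.I * (vy1 : ℂ)) +
      -(vy1 : ℂ) * Complex.I * ((c : ℂ) * 1 + ((sn / ω : ℝ) : ℂ) * (Complex.I * (vy1 : ℂ)))
      = ((vy1 ^ 2 * (sn / ω) - sn * ω : ℝ) : ℂ) := by
    push_cast
    linear_combination (-(vy1 : ℂ) ^ 2 * ((sn : ℂ) / (ω : ℂ))) * Complex.I_sq
  have hz1 : ((-sn * ω : ℝ) : ℂ) * 0 + (c : ℂ) * ((vx2 : ℂ) + Complex.I * (vy2 : ℂ)) +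
      -(vy1 : ℂ) * Complex.I *
        ((c : ℂ) * 0 + ((sn / ω : ℝ) : ℂ) * ((vx2 : ℂ) + Complex.I * (vy2 : ℂ)))
      = ((c : ℂ) - Complex.I * ((vy1 * (sn / ω) : ℝ) : ℂ)) *
          ((vx2 : ℂ) + Complex.I * (vy2 : ℂ)) := by
    push_cast
    ring
  rw [hz0, hz1, Complex.norm_real, Real.norm_eq_abs, _root_.sq_abs, norm_mul, mul_pow]
  have ha : ‖(c : ℂ) - Complex.I * ((vy1 * (sn / ω) : ℝ) : ℂ)‖ ^ 2
      = c ^ 2 + (vy1 * (sn / ω)) ^ 2 := by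
    rw [Complex.sq_norm, Complex.normSq_apply]
    simp
    ring
  have hb : ‖(vx2 : ℂ) + Complex.I * (vy2 : ℂ)‖ ^ 2 = vx2 ^ 2 + vy2 ^ 2 := by
    rw [Complex.sq_norm, Complex.normSq_apply]
    simp
    ring
  rw [ha, hb, hunit, mul_one]
  have hkey : (vy1 ^ 2 * (sn / ω) - sn * ω) ^ 2 + (c ^ 2 + (vy1 * (sn / ω)) ^ 2) = 1 := by
    have h1 : vy1 ^ 2 * (sn / ω) - sn * ω = -(sn / ω) := by
      field_simp
      linear_combination (-sn) * hω2
    rw [h1]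
    field_simp
    linear_combination (c ^ 2 - 1) * hω2 + (vy1 ^ 2 + 1) * hpyth
  rw [hkey, Real.sqrt_one]
end

section
/- Let γ(t) = e^{-i c t}·γ_R(t) be the sub-Riemannian geodesic in S³ with γ(0) = p, where γ_R is the great circle with initial velocity v ∈ T_p S³ and c = ⟨v, V(p)⟩ with V(p) = i·p. Writing α = ⟨v, X(p)⟩ and β = ⟨v, Y(p)⟩ for the orthonormal horizontal frame X, Y on S³, one has γ̇(t) = f_X(t) X(γ(t)) + f_Y(t) Y(γ(t)), where f_X(t) = α cos(2ct) + β sin(2ct) and f_Y(t) = β cos(2ct) − α sin(2ct). -/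
open Complex

/-- Decomposition of the velocity of an arc-length sub-Riemannian geodesic on `S³ ⊂ ℂ²` in the
horizontal orthonormal frame `X, Y`: `γ̇(t) = f_X(t) X(γ(t)) + f_Y(t) Y(γ(t))` with
`f_X(t) = α cos(2ct) + β sin(2ct)`, `f_Y(t) = β cos(2ct) − α sin(2ct)`.
In complex coordinates `X(q) = (-conj q₂, conj q₁)` and `Y(q) = i·X(q)`, which correspond to
the real frame `X(p) = (-x₂,y₂,x₁,-y₁)`, `Y(p) = (-y₂,-x₂,y₁,x₁)`. -/
theorem s3_geodesic_velocity_frame (p v : EuclideanSpace ℂ (Fin 2)) (hp : ‖p‖ = 1)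
    (htan : (inner ℂ v p : ℂ).re = 0)
    (Xf Yf : EuclideanSpace ℂ (Fin 2) → EuclideanSpace ℂ (Fin 2))
    (hXf : ∀ q, Xf q = ![-(starRingEnd ℂ) (q 1), (starRingEnd ℂ) (q 0)])
    (hYf : ∀ q, Yf q = Complex.I • Xf q)
    (c α β : ℝ)
    (hc : c = (inner ℂ v (Complex.I • p) : ℂ).re)
    (hα : α = (inner ℂ v (Xf p) : ℂ).re)
    (hβ : β = (inner ℂ v (Yf p) : ℂ).re)
    (harc : ‖v‖ ^ 2 = 1 + c ^ 2)
    (γ : ℝ → EuclideanSpace ℂ (Fin 2))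
    (hγ : ∀ t, γ t = Complex.exp (-(c * t) * Complex.I) •
      ((Real.cos (‖v‖ * t) : ℂ) • p + ((Real.sin (‖v‖ * t) / ‖v‖ : ℝ) : ℂ) • v)) :
    ∀ t, deriv γ t =
      (α * Real.cos (2 * c * t) + β * Real.sin (2 * c * t)) • Xf (γ t) +
      (β * Real.cos (2 * c * t) - α * Real.sin (2 * c * t)) • Yf (γ t) := by
  intro t
  obtain rfl := funext hγ
  set ω := ‖v‖ with hωdef
  have hω0 : (0:ℝ) < ω := by
    have h0 : (0:ℝ) ≤ ω := hωdef ▸ norm_nonneg v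
    nlinarith [sq_nonneg c]
  have hωne : ω ≠ 0 := ne_of_gt hω0
  -- derivative
  have he : HasDerivAt (fun t : ℝ => Complex.exp (-(c * t) * Complex.I))
      (-(c:ℂ) * I * Complex.exp (-(c * t) * Complex.I)) t := by
    have h1 : HasDerivAt (fun t : ℝ => ((-(c * t) : ℝ) : ℂ)) (-(c:ℂ)) t := by
      simpa using ((hasDerivAt_id t).const_mul c).neg.ofReal_comp
    simpa [mul_comm] using (h1.mul_const I).cexp
  have hcos : HasDerivAt (fun t : ℝ => ((Real.cos (ω * t) : ℝ) : ℂ))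
      ((-(Real.sin (ω * t)) * ω : ℝ) : ℂ) t := by
    simpa using (((hasDerivAt_id t).const_mul ω).cos).ofReal_comp
  have hsin : HasDerivAt (fun t : ℝ => ((Real.sin (ω * t) / ω : ℝ) : ℂ))
      ((Real.cos (ω * t) : ℝ) : ℂ) t := by
    have h := (((hasDerivAt_id t).const_mul ω).sin).div_const ω
    simp only [id_eq, mul_one] at h
    rw [show Real.cos (ω * t) * ω / ω = Real.cos (ω * t) from by field_simp] at h
    exact h.ofReal_comp
  have hd := he.smul ((hcos.smul_const p).add (hsin.smul_const v))
  have hd' : HasDerivAt (fun x : ℝ => Complex.exp (-(c * x) * Complex.I) •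
      ((Real.cos (ω * x) : ℂ) • p + ((Real.sin (ω * x) / ω : ℝ) : ℂ) • v))
      (Complex.exp (-(c * t) * Complex.I) • ((((-(Real.sin (ω * t)) * ω : ℝ) : ℂ)) • p +
        ((Real.cos (ω * t) : ℝ) : ℂ) • v) + (-(c:ℂ) * I * Complex.exp (-(c * t) * Complex.I)) •
        ((Real.cos (ω * t) : ℂ) • p + ((Real.sin (ω * t) / ω : ℝ) : ℂ) • v)) t := hd
  rw [hd'.deriv]
  -- complex-linear hypotheses
  have hI : (I:ℂ)^2 = -1 := Complex.I_sq
  have hzp : (inner ℂ v p : ℂ) = -(c:ℂ) * I := by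
    rw [inner_smul_right] at hc
    apply Complex.ext
    · simpa using htan
    · have : c = -(inner ℂ v p : ℂ).im := by rw [hc]; simp
      simp [this]
  have hzx : (inner ℂ v (Xf p) : ℂ) = (α:ℂ) - (β:ℂ) * I := by
    rw [hYf, inner_smul_right] at hβ
    apply Complex.ext
    · simpa using hα.symm
    · have : β = -(inner ℂ v (Xf p) : ℂ).im := by rw [hβ]; simp
      simp [this]
  have H1 : (starRingEnd ℂ) (v 0) * p 0 + (starRingEnd ℂ) (v 1) * p 1 = -(c:ℂ) * I := by
    rw [← hzp]; simp [PiLp.inner_apply, RCLike.inner_apply, Fin.sum_univ_two]; ring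
  have H1c : v 0 * (starRingEnd ℂ) (p 0) + v 1 * (starRingEnd ℂ) (p 1) = (c:ℂ) * I := by
    have := congrArg (starRingEnd ℂ) H1
    simpa [mul_comm] using this
  have H2 : v 1 * p 0 - v 0 * p 1 = (α:ℂ) + (β:ℂ) * I := by
    have := congrArg (starRingEnd ℂ) hzx
    simp only [PiLp.inner_apply, RCLike.inner_apply, Fin.sum_univ_two] at this
    rw [hXf] at this
    simp only [Matrix.cons_val_zero, Matrix.cons_val_one, Matrix.head_cons] at this
    simp only [map_add, map_mul, map_sub, map_neg, RingHom.map_one, Complex.conj_conj,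
      Complex.conj_ofReal, Complex.conj_I] at this
    linear_combination this
  have Hp : p 0 * (starRingEnd ℂ) (p 0) + p 1 * (starRingEnd ℂ) (p 1) = 1 := by
    have h : (inner ℂ p p : ℂ) = 1 := by
      rw [inner_self_eq_norm_sq_to_K, hp]; norm_num
    rw [← h]; simp only [PiLp.inner_apply, RCLike.inner_apply, Fin.sum_univ_two]
  have Hv : v 0 * (starRingEnd ℂ) (v 0) + v 1 * (starRingEnd ℂ) (v 1) = 1 + (c:ℂ)^2 := by
    have h : (inner ℂ v v : ℂ) = 1 + (c:ℂ)^2 := by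
      rw [inner_self_eq_norm_sq_to_K, ← hωdef]
      norm_cast
      norm_num [harc]
    rw [← h]; simp only [PiLp.inner_apply, RCLike.inner_apply, Fin.sum_univ_two]
  have hw : Complex.exp (-(c * t) * I) = ((Real.cos (c*t) : ℝ) : ℂ) - ((Real.sin (c*t) : ℝ) : ℂ) * I := by
    rw [show (-(↑c * ↑t) * I : ℂ) = ((-(c*t) : ℝ) : ℂ) * I from by push_cast; ring]
    rw [Complex.exp_mul_I, ← Complex.ofReal_cos, ← Complex.ofReal_sin]
    push_cast [Real.cos_neg, Real.sin_neg]
    ring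
  have hcos2 : Real.cos (2*c*t) = Real.cos (c*t)^2 - Real.sin (c*t)^2 := by
    rw [show 2*c*t = 2*(c*t) from by ring, Real.cos_two_mul, ← Real.sin_sq_add_cos_sq (c*t)]
    ring
  have hsin2 : Real.sin (2*c*t) = 2 * Real.sin (c*t) * Real.cos (c*t) := by
    rw [show 2*c*t = 2*(c*t) from by ring, Real.sin_two_mul]
  have hCS : ((Real.cos (c*t) : ℝ) : ℂ)^2 + ((Real.sin (c*t) : ℝ) : ℂ)^2 = 1 := by
    norm_cast
    exact Real.cos_sq_add_sin_sq (c*t)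
  have hωc : (ω : ℂ) ≠ 0 := Complex.ofReal_ne_zero.mpr hωne
  have hsω : ((Real.sin (ω*t) : ℝ) : ℂ) = (ω : ℂ) * ((Real.sin (ω*t)/ω : ℝ) : ℂ) := by
    push_cast
    field_simp
  have hω2 : ((ω : ℝ) : ℂ)^2 = 1 + (c : ℂ)^2 := by
    norm_cast
  have hCS' : Complex.cos ((c:ℂ)*(t:ℂ))^2 + Complex.sin ((c:ℂ)*(t:ℂ))^2 = 1 :=
    Complex.cos_sq_add_sin_sq ((c:ℂ)*(t:ℂ))
  have k0a : v 0 - (c:ℂ)*Complex.I*(p 0) = ((α:ℂ)+(β:ℂ)*Complex.I) * (-((starRingEnd ℂ) (p 1))) := by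
    linear_combination (-((starRingEnd ℂ) (p 1))) * H2 - (v 0) * Hp + (p 0) * H1c
  have k0b : v 1 - (c:ℂ)*Complex.I*(p 1) = ((α:ℂ)+(β:ℂ)*Complex.I) * ((starRingEnd ℂ) (p 0)) := by
    linear_combination ((starRingEnd ℂ) (p 0)) * H2 - (v 1) * Hp + (p 1) * H1c
  have k1a : -(1+(c:ℂ)^2) * p 0 - (c:ℂ)*Complex.I*(v 0) = ((α:ℂ)+(β:ℂ)*Complex.I) * (-((starRingEnd ℂ) (v 1))) := by
    linear_combination (-((starRingEnd ℂ) (v 1))) * H2 - (v 0) * H1 + (p 0) * Hv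
  have k1b : -(1+(c:ℂ)^2) * p 1 - (c:ℂ)*Complex.I*(v 1) = ((α:ℂ)+(β:ℂ)*Complex.I) * ((starRingEnd ℂ) (v 0)) := by
    linear_combination ((starRingEnd ℂ) (v 0)) * H2 - (v 1) * H1 + (p 1) * Hv
  rw [hYf]
  refine PiLp.ext fun i => ?_
  fin_cases i
  · simp only [PiLp.add_apply, PiLp.smul_apply, Matrix.cons_val_zero, Matrix.cons_val_one,
      Matrix.head_cons, smul_eq_mul, Complex.real_smul, map_mul, map_add, map_sub, map_neg,
      Complex.conj_ofReal, Complex.conj_I, Fin.isValue, Fin.mk_zero, Fin.mk_one, hXf]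
    rw [hcos2, hsin2, hw]
    simp only [map_sub, map_mul, map_add, Complex.conj_ofReal, Complex.conj_I]
    push_cast
    field_simp
    simp only [mul_comm (t:ℂ) (ω:ℂ)]
    linear_combination (((Complex.cos ((c:ℂ)*(t:ℂ))) - (Complex.sin ((c:ℂ)*(t:ℂ)))*Complex.I)*(Complex.cos ((ω:ℂ)*(t:ℂ)))*((ω:ℝ):ℂ)) * k0a + (((Complex.cos ((c:ℂ)*(t:ℂ))) - (Complex.sin ((c:ℂ)*(t:ℂ)))*Complex.I)*(Complex.sin ((ω:ℂ)*(t:ℂ)))) * k1a - (((Complex.cos ((c:ℂ)*(t:ℂ))) - (Complex.sin ((c:ℂ)*(t:ℂ)))*Complex.I)*(Complex.sin ((ω:ℂ)*(t:ℂ)))*(p 0)) * hω2 + (((α:ℂ) + (β:ℂ)*Complex.I)*((Complex.cos ((c:ℂ)*(t:ℂ))) - (Complex.sin ((c:ℂ)*(t:ℂ)))*Complex.I)*((Complex.cos ((ω:ℂ)*(t:ℂ)))*((starRingEnd ℂ) (p 1))*((ω:ℝ):ℂ) + (Complex.sin ((ω:ℂ)*(t:ℂ)))*((starRingEnd ℂ)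 (v 1)))) * hCS' + (-(((α:ℂ) + (β:ℂ)*Complex.I)*((Complex.cos ((c:ℂ)*(t:ℂ))) - (Complex.sin ((c:ℂ)*(t:ℂ)))*Complex.I)*((Complex.cos ((ω:ℂ)*(t:ℂ)))*((starRingEnd ℂ) (p 1))*((ω:ℝ):ℂ) + (Complex.sin ((ω:ℂ)*(t:ℂ)))*((starRingEnd ℂ) (v 1)))*(Complex.sin ((c:ℂ)*(t:ℂ)))^2) + (-(α:ℂ)*(Complex.sin ((c:ℂ)*(t:ℂ)))^2 + 2*(β:ℂ)*(Complex.sin ((c:ℂ)*(t:ℂ)))*(Complex.cos ((c:ℂ)*(t:ℂ))) - (β:ℂ)*(Complex.sin ((c:ℂ)*(t:ℂ)))^2*Complex.I)*((Complex.cos ((c:ℂ)*(t:ℂ))) + (Complex.sin ((c:ℂ)*(t:ℂ)))*Complex.I)*((Complex.cos ((ω:ℂ)*(t:ℂ)))*((starRingEnd ℂ) (p 1))*((ω:ℝ):ℂ) + (Complex.sin ((ω:ℂ)*(t:ℂ)))*((starRingEnd ℂ) (v 1)))) * hI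
  · simp only [PiLp.add_apply, PiLp.smul_apply, Matrix.cons_val_zero, Matrix.cons_val_one,
      Matrix.head_cons, smul_eq_mul, Complex.real_smul, map_mul, map_add, map_sub, map_neg,
      Complex.conj_ofReal, Complex.conj_I, Fin.isValue, Fin.mk_zero, Fin.mk_one, hXf]
    rw [hcos2, hsin2, hw]
    simp only [map_sub, map_mul, map_add, Complex.conj_ofReal, Complex.conj_I]
    push_cast
    field_simp
    simp only [mul_comm (t:ℂ) (ω:ℂ)]
    linear_combination (((Complex.cos ((c:ℂ)*(t:ℂ))) - (Complex.sin ((c:ℂ)*(t:ℂ)))*Complex.I)*(Complex.cos ((ω:ℂ)*(t:ℂ)))*((ω:ℝ):ℂ)) * k0b + (((Complex.cos ((c:ℂ)*(t:ℂ))) - (Complex.sin ((c:ℂ)*(t:ℂ)))*Complex.I)*(Complex.sin ((ω:ℂ)*(t:ℂ)))) * k1b - (((Complex.cos ((c:ℂ)*(t:ℂ))) - (Complex.sin ((c:ℂ)*(t:ℂ)))*Complex.I)*(Complex.sin ((ω:ℂ)*(t:ℂ)))*(p 1)) * hω2 - (((α:ℂ) + (β:ℂ)*Complex.I)*((Complex.cos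 ((c:ℂ)*(t:ℂ))) - (Complex.sin ((c:ℂ)*(t:ℂ)))*Complex.I)*((Complex.cos ((ω:ℂ)*(t:ℂ)))*((starRingEnd ℂ) (p 0))*((ω:ℝ):ℂ) + (Complex.sin ((ω:ℂ)*(t:ℂ)))*((starRingEnd ℂ) (v 0)))) * hCS' + ((((α:ℂ) + (β:ℂ)*Complex.I)*((Complex.cos ((c:ℂ)*(t:ℂ))) - (Complex.sin ((c:ℂ)*(t:ℂ)))*Complex.I)*((Complex.cos ((ω:ℂ)*(t:ℂ)))*((starRingEnd ℂ) (p 0))*((ω:ℝ):ℂ) + (Complex.sin ((ω:ℂ)*(t:ℂ)))*((starRingEnd ℂ) (v 0)))*(Complex.sin ((c:ℂ)*(t:ℂ)))^2) - (-(α:ℂ)*(Complex.sin ((c:ℂ)*(t:ℂ)))^2 + 2*(β:ℂ)*(Complex.sin ((c:ℂ)*(t:ℂ)))*(Complex.cos ((c:ℂ)*(t:ℂ))) - (β:ℂ)*(Complex.sin ((c:ℂ)*(t:ℂ)))^2*Complex.I)*((Complex.cos ((c:ℂ)*(t:ℂ))) + (Complex.sin ((c:ℂ)*(t:ℂ)))*Complex.I)*((Complex.cos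 ((ω:ℂ)*(t:ℂ)))*((starRingEnd ℂ) (p 0))*((ω:ℝ):ℂ) + (Complex.sin ((ω:ℂ)*(t:ℂ)))*((starRingEnd ℂ) (v 0)))) * hI
end

section
/- Let γ be a sub-Riemannian geodesic in S³ parameterized by arc-length, of the form γ(t) = e^{-ict}γ_R(t) with c = ⟨v, V(p)⟩ where γ_R is the great circle with γ_R(0)=p, γ̇_R(0)=v. Then γ satisfies the equation ∇_{γ̇}γ̇ + 2c J(γ̇) = 0, where ∇ is the Levi-Civita connection of the round metric on S³ (the tangential projection of the second derivative in ℝ⁴) and J is the almost complex structure J(X(q)) = Y(q), J(Y(q)) = −X(q) on the horizontal distribution span{X,Y}. That is, γ has constant curvature λ = c = ⟨v, V(p)⟩. -/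
noncomputable section SubRiemannianAux

private lemma s3aux_inner_two (x y : EuclideanSpace ℂ (Fin 2)) :
    (inner ℂ x y : ℂ) = (starRingEnd ℂ) (x 0) * y 0 + (starRingEnd ℂ) (x 1) * y 1 := by
  simp [PiLp.inner_apply, RCLike.inner_apply, Fin.sum_univ_two]; ring

private lemma s3aux_J_horiz (w q : EuclideanSpace ℂ (Fin 2))
    (hq : (inner ℂ q q : ℂ) = 1) (hw : (inner ℂ w q : ℂ) = 0) :
    (-((inner ℂ w (Complex.I • (WithLp.toLp 2 ![-(starRingEnd ℂ) (q 1), (starRingEnd ℂ) (q 0)] : EuclideanSpace ℂ (Fin 2))) : ℂ).re)) •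
        (WithLp.toLp 2 ![-(starRingEnd ℂ) (q 1), (starRingEnd ℂ) (q 0)] : EuclideanSpace ℂ (Fin 2)) +
      ((inner ℂ w (WithLp.toLp 2 ![-(starRingEnd ℂ) (q 1), (starRingEnd ℂ) (q 0)] : EuclideanSpace ℂ (Fin 2)) : ℂ).re) •
        (Complex.I • (WithLp.toLp 2 ![-(starRingEnd ℂ) (q 1), (starRingEnd ℂ) (q 0)] : EuclideanSpace ℂ (Fin 2))) =
    Complex.I • w := by
  have hq' := (s3aux_inner_two q q).symm.trans hq
  have hw' := (s3aux_inner_two w q).symm.trans hw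
  have hwc : w 0 * (starRingEnd ℂ) (q 0) + w 1 * (starRingEnd ℂ) (q 1) = 0 := by
    have := congrArg (starRingEnd ℂ) hw'
    simpa [mul_comm] using this
  set B : ℂ := w 1 * q 0 - w 0 * q 1 with hB
  have hiX : (inner ℂ w (WithLp.toLp 2 ![-(starRingEnd ℂ) (q 1), (starRingEnd ℂ) (q 0)] : EuclideanSpace ℂ (Fin 2)) : ℂ)
      = (starRingEnd ℂ) B := by
    rw [s3aux_inner_two]
    simp [hB, map_sub, map_mul]
    ring
  have hiY : (inner ℂ w (Complex.I • (WithLp.toLp 2 ![-(starRingEnd ℂ) (q 1), (starRingEnd ℂ) (q 0)] : EuclideanSpace ℂ (Fin 2))) : ℂ)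
      = Complex.I * (starRingEnd ℂ) B := by
    rw [inner_smul_right, hiX]
  rw [hiX, hiY]
  ext i
  fin_cases i <;>
    simp [PiLp.smul_apply, PiLp.add_apply, Complex.real_smul, smul_eq_mul] <;>
    · have hre' : ((B.re : ℝ) : ℂ) + (B.im : ℝ) * Complex.I = w 1 * q 0 - w 0 * q 1 :=
        (Complex.re_add_im B).trans hB
      first
      | linear_combination (-(Complex.I) * (starRingEnd ℂ) (q 1)) * hre' +
          ((B.im : ℝ) : ℂ) * (starRingEnd ℂ) (q 1) * Complex.I_sq +
          Complex.I * w 0 * hq' - Complex.I * (q 0) * hwc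
      | linear_combination (Complex.I * (starRingEnd ℂ) (q 0)) * hre' +
          (-((B.im : ℝ) : ℂ)) * (starRingEnd ℂ) (q 0) * Complex.I_sq +
          Complex.I * w 1 * hq' - Complex.I * (q 1) * hwc

variable (p v : EuclideanSpace ℂ (Fin 2)) (c ω : ℝ)

private def s3ee (t : ℝ) : ℂ := Complex.exp (-(c * t) * Complex.I)
private def s3ff (t : ℝ) : EuclideanSpace ℂ (Fin 2) :=
  (Real.cos (ω * t) : ℂ) • p + ((Real.sin (ω * t) / ω : ℝ) : ℂ) • v
private def s3ff1 (t : ℝ) : EuclideanSpace ℂ (Fin 2) :=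
  ((-(ω * Real.sin (ω * t)) : ℝ) : ℂ) • p + (Real.cos (ω * t) : ℂ) • v
private def s3ff2 (t : ℝ) : EuclideanSpace ℂ (Fin 2) :=
  ((-(ω ^ 2 * Real.cos (ω * t)) : ℝ) : ℂ) • p + ((-(ω * Real.sin (ω * t)) : ℝ) : ℂ) • v

private lemma s3he (t : ℝ) : HasDerivAt (s3ee c) (-(c : ℂ) * Complex.I * s3ee c t) t := by
  have h0 : HasDerivAt (fun s : ℝ => ((s : ℂ))) 1 t := by
    simpa using (hasDerivAt_id t).ofReal_comp
  have h1 := (h0.const_mul (-(c : ℂ) * Complex.I)).cexp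
  have hfun : (fun s : ℝ => Complex.exp (-(c : ℂ) * Complex.I * ↑s)) = s3ee c := by
    funext s; unfold s3ee; ring_nf
  rw [hfun] at h1
  convert h1 using 1
  unfold s3ee; ring_nf

private lemma s3hA (t : ℝ) : HasDerivAt (fun s : ℝ => ((Real.cos (ω * s) : ℝ) : ℂ))
    ((-(ω * Real.sin (ω * t)) : ℝ) : ℂ) t := by
  have h : HasDerivAt (fun s : ℝ => Real.cos (ω * s)) (-(ω * Real.sin (ω * t))) t := by
    have := (Real.hasDerivAt_cos (ω * t)).comp t ((hasDerivAt_id t).const_mul ω)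
    exact this.congr_deriv (by ring)
  exact h.ofReal_comp

private lemma s3hB (hω : ω ≠ 0) (t : ℝ) : HasDerivAt (fun s : ℝ => ((Real.sin (ω * s) / ω : ℝ) : ℂ))
    ((Real.cos (ω * t) : ℝ) : ℂ) t := by
  have h : HasDerivAt (fun s : ℝ => Real.sin (ω * s) / ω) (Real.cos (ω * t)) t := by
    have := ((Real.hasDerivAt_sin (ω * t)).comp t ((hasDerivAt_id t).const_mul ω)).div_const ω
    exact this.congr_deriv (by field_simp)
  exact h.ofReal_comp

private lemma s3hfd (hω : ω ≠ 0) (t : ℝ) : HasDerivAt (s3ff p v ω) (s3ff1 p v ω t) t :=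
  ((s3hA ω t).smul_const p).add ((s3hB ω hω t).smul_const v)

private lemma s3hf1d (t : ℝ) : HasDerivAt (s3ff1 p v ω) (s3ff2 p v ω t) t := by
  have h1 : HasDerivAt (fun s : ℝ => ((-(ω * Real.sin (ω * s)) : ℝ) : ℂ))
      ((-(ω ^ 2 * Real.cos (ω * t)) : ℝ) : ℂ) t := by
    have h : HasDerivAt (fun s : ℝ => -(ω * Real.sin (ω * s))) (-(ω ^ 2 * Real.cos (ω * t))) t := by
      have := (((Real.hasDerivAt_sin (ω * t)).comp t ((hasDerivAt_id t).const_mul ω)).const_mul ω).neg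
      exact this.congr_deriv (by ring)
    exact h.ofReal_comp
  exact (h1.smul_const p).add ((s3hA ω t).smul_const v)

private def s3gg1 (t : ℝ) : EuclideanSpace ℂ (Fin 2) :=
  s3ee c t • s3ff1 p v ω t + (-(c : ℂ) * Complex.I * s3ee c t) • s3ff p v ω t

private def s3gg2 (t : ℝ) : EuclideanSpace ℂ (Fin 2) :=
  s3ee c t • s3ff2 p v ω t + (-(c : ℂ) * Complex.I * s3ee c t) • s3ff1 p v ω t
    + (-(c : ℂ) * Complex.I * s3ee c t) • s3ff1 p v ω t
    + ((-(c : ℂ) * Complex.I) * (-(c : ℂ) * Complex.I) * s3ee c t) • s3ff p v ω t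

private lemma s3hgd (hω : ω ≠ 0) (t : ℝ) :
    HasDerivAt (fun s => s3ee c s • s3ff p v ω s) (s3gg1 p v c ω t) t :=
  (s3he c t).smul (s3hfd p v ω hω t)

private lemma s3hg1d (hω : ω ≠ 0) (t : ℝ) : HasDerivAt (s3gg1 p v c ω) (s3gg2 p v c ω t) t := by
  unfold s3gg1 s3gg2
  have h1 := (s3he c t).smul (s3hf1d p v ω t)
  have h2 := ((s3he c t).const_mul (-(c : ℂ) * Complex.I)).smul (s3hfd p v ω hω t)
  have := h1.add h2
  exact this.congr_deriv (by module)

variable (hpp : (inner ℂ p p : ℂ) = 1) (hvp : (inner ℂ v p : ℂ) = -(c : ℂ) * Complex.I)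
  (hpv : (inner ℂ p v : ℂ) = (c : ℂ) * Complex.I) (hvv : (inner ℂ v v : ℂ) = ((ω : ℂ)) ^ 2)
  (hω : ω ≠ 0)

include hpp hvp hpv hvv hω in
private lemma s3Inn_ff (t : ℝ) : (inner ℂ (s3ff p v ω t) (s3ff p v ω t) : ℂ) = 1 := by
  simp only [s3ff, inner_add_left, inner_add_right, inner_smul_left, inner_smul_right,
    hpp, hvp, hpv, hvv, Complex.conj_ofReal]
  have h' := Complex.sin_sq_add_cos_sq ((ω : ℂ) * (t : ℂ))
  have hωC : (ω : ℂ) ≠ 0 := by exact_mod_cast hω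
  push_cast
  field_simp
  linear_combination (ω : ℂ) * h'

include hpp hvp hpv hvv hω in
private lemma s3If1f (t : ℝ) : (inner ℂ (s3ff1 p v ω t) (s3ff p v ω t) : ℂ) = -(c : ℂ) * Complex.I := by
  simp only [s3ff, s3ff1, inner_add_left, inner_add_right, inner_smul_left, inner_smul_right,
    hpp, hvp, hpv, hvv, Complex.conj_ofReal]
  have h' := Complex.sin_sq_add_cos_sq ((ω : ℂ) * (t : ℂ))
  have hωC : (ω : ℂ) ≠ 0 := by exact_mod_cast hω
  push_cast
  field_simp
  linear_combination -(c : ℂ) * Complex.I * h'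

include hpp hvp hpv hvv hω in
private lemma s3If2f (t : ℝ) : (inner ℂ (s3ff2 p v ω t) (s3ff p v ω t) : ℂ) = -((ω : ℂ)) ^ 2 := by
  simp only [s3ff, s3ff2, inner_add_left, inner_add_right, inner_smul_left, inner_smul_right,
    hpp, hvp, hpv, hvv, Complex.conj_ofReal]
  have h' := Complex.sin_sq_add_cos_sq ((ω : ℂ) * (t : ℂ))
  have hωC : (ω : ℂ) ≠ 0 := by exact_mod_cast hω
  push_cast
  field_simp
  linear_combination -(ω : ℂ) * h'

private lemma s3hee (t : ℝ) : (starRingEnd ℂ) (s3ee c t) * s3ee c t = 1 := by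
  unfold s3ee
  rw [← Complex.exp_conj, ← Complex.exp_add]
  simp

end SubRiemannianAux

/-- An arc-length sub-Riemannian geodesic `γ(t) = e^{-ict} γ_R(t)` on `S³ ⊂ ℂ²` satisfies
`∇_{γ̇}γ̇ + 2c J(γ̇) = 0`, i.e. it has constant curvature `λ = c = ⟨v, V(p)⟩`.
Here `∇_{γ̇}γ̇` is the tangential projection `γ̈ − ⟨γ̈, γ⟩ γ` of the ambient second derivative,
and `J` acts on horizontal vectors `w` by `J(w) = −⟨w, Y⟩ X + ⟨w, X⟩ Y`, i.e.
`J(X) = Y`, `J(Y) = −X` for the horizontal frame `X(q) = (-conj q₂, conj q₁)`, `Y = i·X`. -/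
theorem s3_geodesic_curvature_equation (p v : EuclideanSpace ℂ (Fin 2)) (hp : ‖p‖ = 1)
    (htan : (inner ℂ v p : ℂ).re = 0)
    (Xf Yf : EuclideanSpace ℂ (Fin 2) → EuclideanSpace ℂ (Fin 2))
    (hXf : ∀ q, Xf q = ![-(starRingEnd ℂ) (q 1), (starRingEnd ℂ) (q 0)])
    (hYf : ∀ q, Yf q = Complex.I • Xf q)
    (c : ℝ) (hc : c = (inner ℂ v (Complex.I • p) : ℂ).re)
    (harc : ‖v‖ ^ 2 = 1 + c ^ 2)
    (γ : ℝ → EuclideanSpace ℂ (Fin 2))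
    (hγ : ∀ t, γ t = Complex.exp (-(c * t) * Complex.I) •
      ((Real.cos (‖v‖ * t) : ℂ) • p + ((Real.sin (‖v‖ * t) / ‖v‖ : ℝ) : ℂ) • v)) :
    ∀ t,
      (deriv (deriv γ) t - ((inner ℂ (deriv (deriv γ) t) (γ t) : ℂ).re) • γ t) +
      (2 * c) • ((-((inner ℂ (deriv γ t) (Yf (γ t)) : ℂ).re)) • Xf (γ t) +
        ((inner ℂ (deriv γ t) (Xf (γ t)) : ℂ).re) • Yf (γ t)) = 0 := by
  set ω : ℝ := ‖v‖ with hωdef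
  have hω : ω ≠ 0 := by
    intro h
    rw [h] at harc
    nlinarith [sq_nonneg c]
  -- inner ℂ product facts
  have hpp : (inner ℂ p p : ℂ) = 1 := by
    rw [inner_self_eq_norm_sq_to_K, hp]; norm_num
  have hvv : (inner ℂ v v : ℂ) = ((ω : ℂ)) ^ 2 := by
    rw [inner_self_eq_norm_sq_to_K, hωdef]
    norm_cast
  have him : (inner ℂ v p : ℂ).im = -c := by
    have h1 : (inner ℂ v (Complex.I • p) : ℂ) = Complex.I * (inner ℂ v p : ℂ) :=
      inner_smul_right _ _ _
    have h2 : (Complex.I * (inner ℂ v p : ℂ)).re = -(inner ℂ v p : ℂ).im := by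
      rw [Complex.mul_re, Complex.I_re, Complex.I_im]; ring
    rw [h1, h2] at hc
    linarith
  have hvp : (inner ℂ v p : ℂ) = -(c : ℂ) * Complex.I := by
    apply Complex.ext
    · rw [htan]; simp
    · rw [him]; simp
  have hpv : (inner ℂ p v : ℂ) = (c : ℂ) * Complex.I := by
    rw [← inner_conj_symm, hvp]
    simp
  -- the curve in terms of the auxiliary functions
  have hγfun : γ = fun t => s3ee c t • s3ff p v ω t := by
    funext t; rw [hγ t]; rfl
  have hd1 : deriv γ = s3gg1 p v c ω := by
    funext t
    rw [hγfun]
    exact (s3hgd p v c ω hω t).deriv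
  have hd2 : ∀ t, deriv (deriv γ) t = s3gg2 p v c ω t := by
    intro t
    rw [hd1]
    exact (s3hg1d p v c ω hω t).deriv
  intro t
  have hγt : γ t = s3ee c t • s3ff p v ω t := by rw [hγfun]
  have hee := s3hee c t
  -- ⟨γ, γ⟩ = 1
  have hIγγ : (inner ℂ (γ t) (γ t) : ℂ) = 1 := by
    rw [hγt, inner_smul_left, inner_smul_right,
      s3Inn_ff p v c ω hpp hvp hpv hvv hω t]
    rw [mul_one]
    exact hee
  -- ⟨γ', γ⟩ = 0
  have hI1 : (inner ℂ (s3gg1 p v c ω t) (γ t) : ℂ) = 0 := by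
    rw [hγt]
    unfold s3gg1
    simp only [inner_add_left, inner_smul_left, inner_smul_right, map_mul, map_neg,
      Complex.conj_I, Complex.conj_ofReal,
      s3Inn_ff p v c ω hpp hvp hpv hvv hω t,
      s3If1f p v c ω hpp hvp hpv hvv hω t]
    linear_combination ((-(c:ℂ)) * Complex.I + (c:ℂ) * Complex.I) * hee
  -- ⟨γ'', γ⟩ = -1
  have hω2C : ((ω : ℂ)) ^ 2 = 1 + (c : ℂ) ^ 2 := by exact_mod_cast harc
  have hI2 : (inner ℂ (s3gg2 p v c ω t) (γ t) : ℂ) = -1 := by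
    rw [hγt]
    unfold s3gg2
    simp only [inner_add_left, inner_smul_left, inner_smul_right, map_mul, map_neg,
      Complex.conj_I, Complex.conj_ofReal,
      s3Inn_ff p v c ω hpp hvp hpv hvv hω t,
      s3If1f p v c ω hpp hvp hpv hvv hω t,
      s3If2f p v c ω hpp hvp hpv hvv hω t]
    linear_combination (-(ω:ℂ)^2 + 2*(c:ℂ)^2 - (c:ℂ)^2*Complex.I*Complex.I) * hee -
      hω2C + (c:ℂ)^2 * (1 - (starRingEnd ℂ) (s3ee c t) * s3ee c t) * Complex.I_sq +
      (-(c:ℂ)^2 + (c:ℂ)^2*Complex.I^2) * hee + (-(c:ℂ)^2) * Complex.I_sq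
  -- rewrite the goal
  rw [hd2 t, hd1, hI2]
  have hXf' : ∀ q, Xf q = WithLp.toLp 2 ![-(starRingEnd ℂ) (q 1), (starRingEnd ℂ) (q 0)] :=
    fun q => by rw [← hXf q, WithLp.toLp_ofLp]
  rw [hXf', hYf, hXf']
  rw [s3aux_J_horiz (s3gg1 p v c ω t) (γ t) hIγγ hI1]
  norm_num
  -- final algebraic identity
  rw [hγt]
  unfold s3gg2 s3gg1 s3ff s3ff1 s3ff2
  have e1 : -(ω ^ 2 * Real.cos (ω * t)) = -((1 + c ^ 2) * Real.cos (ω * t)) := by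
    rw [harc]
  have e2 : -(ω * Real.sin (ω * t)) = -((1 + c ^ 2) * (Real.sin (ω * t) / ω)) := by
    field_simp
    linear_combination -Real.sin (ω * t) * harc
  rw [e1, e2]
  ext i
  fin_cases i <;>
  · simp only [PiLp.add_apply, PiLp.sub_apply, PiLp.smul_apply, PiLp.zero_apply,
      smul_eq_mul, Complex.real_smul, Complex.ofReal_mul, Complex.ofReal_ofNat]
    push_cast
    first
    | linear_combination (-(s3ee c t * (c:ℂ)^2 * (Complex.cos ((ω:ℂ)*(t:ℂ)) * p 0 +
        Complex.sin ((ω:ℂ)*(t:ℂ)) * ((ω:ℂ))⁻¹ * v 0))) * Complex.I_sq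
    | linear_combination (-(s3ee c t * (c:ℂ)^2 * (Complex.cos ((ω:ℂ)*(t:ℂ)) * p 1 +
        Complex.sin ((ω:ℂ)*(t:ℂ)) * ((ω:ℂ))⁻¹ * v 1))) * Complex.I_sq
end

section
/- Let p ∈ S^{4n+3} ⊂ ℍ^{n+1} and v ∈ T_p S^{4n+3}. Set A(v) = i⟨v, p·i⟩ + j⟨v, p·j⟩ + k⟨v, p·k⟩ ∈ Im ℍ, let γ_R(t) = p cos(‖v‖t) + (v/‖v‖) sin(‖v‖t), and γ(t) = γ_R(t)·e^{−tA(v)} (componentwise right multiplication by the quaternion exponential). Then ‖γ̇(0)‖² + ‖A(v)‖² = ‖v‖², where ‖A(v)‖² = ⟨v,p·i⟩² + ⟨v,p·j⟩² + ⟨v,p·k⟩². -/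
open Quaternion

/-- Pythagoras-type relation on `S^{4n+3} ⊂ ℍ^{n+1}`: for the sub-Riemannian geodesic
`γ(t) = γ_R(t)·e^{−tA(v)}` one has `‖γ̇(0)‖² + ‖A(v)‖² = ‖v‖²`, where
`A(v) = i⟨v,p·i⟩ + j⟨v,p·j⟩ + k⟨v,p·k⟩` and `e^q = cos|q| + (q/|q|) sin|q|` is the
quaternion exponential of imaginary quaternions. -/
theorem quaternionic_geodesic_speed (n : ℕ)
    (qi qj qk : ℍ[ℝ])
    (hqi : qi = ⟨0, 1, 0, 0⟩) (hqj : qj = ⟨0, 0, 1, 0⟩) (hqk : qk = ⟨0, 0, 0, 1⟩)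
    (p v pI pJ pK : PiLp 2 (fun _ : Fin (n + 1) => ℍ[ℝ])) (hp : ‖p‖ = 1)
    (hpI : ∀ m, pI m = p m * qi)
    (hpJ : ∀ m, pJ m = p m * qj)
    (hpK : ∀ m, pK m = p m * qk)
    (htan : (inner ℝ v p : ℝ) = 0)
    (c1 c2 c3 : ℝ)
    (hc1 : c1 = (inner ℝ v pI : ℝ)) (hc2 : c2 = (inner ℝ v pJ : ℝ)) (hc3 : c3 = (inner ℝ v pK : ℝ))
    (A : ℍ[ℝ]) (hA : A = c1 • qi + c2 • qj + c3 • qk)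
    (qexp : ℍ[ℝ] → ℍ[ℝ])
    (hqexp : ∀ q, qexp q = ((Real.cos ‖q‖ : ℝ) : ℍ[ℝ]) + (Real.sin ‖q‖ / ‖q‖) • q)
    (γ : ℝ → PiLp 2 (fun _ : Fin (n + 1) => ℍ[ℝ]))
    (hγ : ∀ t m, γ t m =
      (Real.cos (‖v‖ * t) • p m + (Real.sin (‖v‖ * t) / ‖v‖) • v m) * qexp ((-t) • A)) :
    ‖deriv γ 0‖ ^ 2 + (c1 ^ 2 + c2 ^ 2 + c3 ^ 2) = ‖v‖ ^ 2 := by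
  classical
  set a := ‖A‖ with ha
  set b := ‖v‖ with hb
  -- norm of A squared
  have hAnorm : a ^ 2 = c1 ^ 2 + c2 ^ 2 + c3 ^ 2 := by
    have h1 : a ^ 2 = Quaternion.normSq A := by
      rw [Quaternion.normSq_eq_norm_mul_self, ← ha]; ring
    have h2 : A = (⟨0, c1, c2, c3⟩ : ℍ[ℝ]) := by
      rw [hA]
      ext <;> simp <;> simp [hqi, hqj, hqk]
    rw [h1, Quaternion.normSq_def', h2]
    simp
  -- explicit formula for qexp ((-t) • A)
  have hG : ∀ t : ℝ, qexp ((-t) • A) =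
      Real.cos (t * a) • (1 : ℍ[ℝ]) - (Real.sin (t * a) / a) • A := by
    intro t
    rcases eq_or_ne A 0 with h0 | h0
    · have haz : a = 0 := by rw [ha, h0, norm_zero]
      rw [h0, haz, hqexp]
      simp [Quaternion.smul_coe]
    rcases eq_or_ne t 0 with ht | ht
    · rw [ht, hqexp]
      simp [Quaternion.smul_coe]
    · rw [hqexp]
      have hA0 : a ≠ 0 := by
        rw [ha]; exact norm_ne_zero_iff.mpr h0
      have hnorm : ‖(-t) • A‖ = |t| * a := by
        rw [norm_smul, Real.norm_eq_abs, abs_neg, ha]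
      rw [hnorm, smul_smul]
      have hcos : Real.cos (|t| * a) = Real.cos (t * a) := by
        rcases abs_choice t with h | h
        · rw [h]
        · rw [h, neg_mul, Real.cos_neg]
      have hsin : Real.sin (|t| * a) / (|t| * a) * (-t) = -(Real.sin (t * a) / a) := by
        rcases abs_choice t with h | h
        · rw [h]; field_simp
        · rw [h, neg_mul, Real.sin_neg]
          field_simp
      rw [hcos, hsin, ← Quaternion.coe_one, Quaternion.smul_coe, mul_one, neg_smul, sub_eq_add_neg]
  -- derivative of t ↦ qexp ((-t) • A) at 0 is -A
  have hGd : HasDerivAt (fun t : ℝ => qexp ((-t) • A)) (-A) 0 := by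
    have hlin : HasDerivAt (fun t : ℝ => t * a) a 0 := hasDerivAt_mul_const a
    have hcos : HasDerivAt (fun t : ℝ => Real.cos (t * a))
        (-Real.sin (0 * a) * a) 0 := HasDerivAt.comp (h₂ := Real.cos) (0:ℝ) (Real.hasDerivAt_cos (0 * a)) hlin
    have hsin : HasDerivAt (fun t : ℝ => Real.sin (t * a))
        (Real.cos (0 * a) * a) 0 := HasDerivAt.comp (h₂ := Real.sin) (0:ℝ) (Real.hasDerivAt_sin (0 * a)) hlin
    have h1 : HasDerivAt (fun t : ℝ => Real.cos (t * a) • (1 : ℍ[ℝ])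
        - (Real.sin (t * a) / a) • A)
        ((-Real.sin (0 * a) * a) • (1 : ℍ[ℝ]) - ((Real.cos (0 * a) * a) / a) • A) 0 :=
      (hcos.smul_const (1 : ℍ[ℝ])).sub ((hsin.div_const a).smul_const A)
    have h2 : ((-Real.sin (0 * a) * a) • (1 : ℍ[ℝ]) - ((Real.cos (0 * a) * a) / a) • A) = -A := by
      rcases eq_or_ne A 0 with h0 | h0
      · rw [h0]; simp
      · have hA0 : a ≠ 0 := by rw [ha]; exact norm_ne_zero_iff.mpr h0
        rw [zero_mul, Real.sin_zero, Real.cos_zero, one_mul, div_self hA0]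
        simp
    rw [h2] at h1
    exact h1.congr_of_eventuallyEq (Filter.Eventually.of_forall fun t => (hG t))
  -- derivative of the radial factor at 0 is v m
  have hFd : ∀ m, HasDerivAt
      (fun t => Real.cos (b * t) • p m + (Real.sin (b * t) / b) • v m) (v m) 0 := by
    intro m
    have hlin : HasDerivAt (fun t : ℝ => b * t) (b * 1) 0 := (hasDerivAt_id 0).const_mul b
    have hcos : HasDerivAt (fun t : ℝ => Real.cos (b * t))
        (-Real.sin (b * 0) * (b * 1)) 0 := (Real.hasDerivAt_cos (b * 0)).comp 0 hlin
    have hsin : HasDerivAt (fun t : ℝ => Real.sin (b * t))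
        (Real.cos (b * 0) * (b * 1)) 0 := (Real.hasDerivAt_sin (b * 0)).comp 0 hlin
    have h1 : HasDerivAt (fun t => Real.cos (b * t) • p m + (Real.sin (b * t) / b) • v m)
        ((-Real.sin (b * 0) * (b * 1)) • p m + ((Real.cos (b * 0) * (b * 1)) / b) • v m) 0 :=
      (hcos.smul_const (p m)).add ((hsin.div_const b).smul_const (v m))
    have h2 : ((-Real.sin (b * 0) * (b * 1)) • p m + ((Real.cos (b * 0) * (b * 1)) / b) • v m)
        = v m := by
      rcases eq_or_ne b 0 with h0 | h0
      · have hv0 : v = 0 := by rw [hb] at h0; exact norm_eq_zero.mp h0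
        have : v m = 0 := by rw [hv0]; rfl
        rw [this, h0]; simp
      · rw [mul_zero, Real.sin_zero, Real.cos_zero, mul_one, one_mul, div_self h0]
        simp
    rwa [h2] at h1
  -- each component of γ
  have hcomp : ∀ m, HasDerivAt (fun t => γ t m) (v m - p m * A) 0 := by
    intro m
    have h := (hFd m).mul hGd
    have hF0 : Real.cos (b * 0) • p m + (Real.sin (b * 0) / b) • v m = p m := by
      simp
    have hG0 : qexp ((-(0:ℝ)) • A) = 1 := by
      rw [hG]; simp
    rw [hF0, hG0, mul_one] at h
    rw [mul_neg, ← sub_eq_add_neg] at h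
    exact h.congr_of_eventuallyEq (Filter.Eventually.of_forall fun t => (hγ t m))
  -- assemble: derivative of γ
  set u : PiLp 2 (fun _ : Fin (n + 1) => ℍ[ℝ]) := (WithLp.equiv 2 (∀ _ : Fin (n + 1), ℍ[ℝ])).symm (fun m => p m * A) with hu
  have hum : ∀ m, u m = p m * A := fun m => rfl
  have hγd : HasDerivAt γ (v - u) 0 := by
    have e := PiLp.continuousLinearEquiv 2 ℝ (fun _ : Fin (n + 1) => ℍ[ℝ])
    have hpi : HasDerivAt (fun t => (WithLp.equiv 2 (∀ _ : Fin (n + 1), ℍ[ℝ])) (γ t))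
        (fun m => v m - p m * A) 0 := by
      refine hasDerivAt_pi.2 fun m => ?_
      simpa only [WithLp.equiv_apply] using hcomp m
    have h2 : HasDerivAt γ
        ((WithLp.equiv 2 (∀ _ : Fin (n + 1), ℍ[ℝ])).symm (fun m => v m - p m * A)) 0 := by
      have := ((PiLp.continuousLinearEquiv 2 ℝ
        (fun _ : Fin (n + 1) => ℍ[ℝ])).symm : (∀ _ : Fin (n + 1), ℍ[ℝ]) →L[ℝ]
          PiLp 2 (fun _ : Fin (n + 1) => ℍ[ℝ])).hasFDerivAt.comp_hasDerivAt 0 hpi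
      exact this
    have h3 : (WithLp.equiv 2 (∀ _ : Fin (n + 1), ℍ[ℝ])).symm (fun m => v m - p m * A)
        = v - u := by
      refine PiLp.ext fun m => ?_
      simp [hum, WithLp.equiv_symm_apply, PiLp.sub_apply]
    rwa [h3] at h2
  rw [hγd.deriv]
  -- inner products
  have hvu : (inner ℝ v u : ℝ) = c1 ^ 2 + c2 ^ 2 + c3 ^ 2 := by
    have hud : u = c1 • pI + c2 • pJ + c3 • pK := by
      refine PiLp.ext fun m => ?_
      rw [hum m, hA]
      simp [hpI, hpJ, hpK, mul_add, mul_smul_comm, PiLp.add_apply, PiLp.smul_apply]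
    rw [hud, inner_add_right, inner_add_right, real_inner_smul_right, real_inner_smul_right,
      real_inner_smul_right, ← hc1, ← hc2, ← hc3]
    ring
  have hunorm : ‖u‖ ^ 2 = c1 ^ 2 + c2 ^ 2 + c3 ^ 2 := by
    rw [← hAnorm, ← real_inner_self_eq_norm_sq]
    have : (inner ℝ u u : ℝ) = ∑ m, (inner ℝ (u m) (u m) : ℝ) := PiLp.inner_apply u u
    rw [this]
    have hterm : ∀ m, (inner ℝ (u m) (u m) : ℝ) = ‖p m‖ ^ 2 * a ^ 2 := by
      intro m
      rw [real_inner_self_eq_norm_sq, hum m, norm_mul, mul_pow, ha]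
    rw [Finset.sum_congr rfl fun m _ => hterm m, ← Finset.sum_mul]
    have hpsum : ∑ m, ‖p m‖ ^ 2 = 1 := by
      have h1 : (inner ℝ p p : ℝ) = ∑ m, (inner ℝ (p m) (p m) : ℝ) := PiLp.inner_apply p p
      have h2 : (inner ℝ p p : ℝ) = ‖p‖ ^ 2 := real_inner_self_eq_norm_sq p
      rw [h2, hp, one_pow] at h1
      rw [← h1.symm]
      exact Finset.sum_congr rfl fun m _ => (real_inner_self_eq_norm_sq (p m)).symm
    rw [hpsum, one_mul]
  have := norm_sub_sq_real v u
  rw [hvu, hunorm] at this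
  rw [this]
  ring
end

section
/- For the orthonormal frame X₁,...,X₇ on S⁷ from octonion multiplication, one has ⟨X_b(p), [X_a, X_b](p)⟩ = 0 for all a ∈ {2,...,7}, b ∈ {1,...,7}, and all p ∈ S⁷; here [X_a,X_b] is the Lie bracket of the vector fields on ℝ⁸ (which is tangent to S⁷). -/
open Matrix

lemma cv5 {α : Type*} {m : ℕ} (x : α) (u : Fin m.succ.succ.succ.succ.succ → α) :
    vecCons x u 5 = vecHead (vecTail (vecTail (vecTail (vecTail u)))) := rfl
lemma cv6 {α : Type*} {m : ℕ} (x : α) (u : Fin m.succ.succ.succ.succ.succ.succ → α) :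
    vecCons x u 6 = vecHead (vecTail (vecTail (vecTail (vecTail (vecTail u))))) := rfl
lemma cv7 {α : Type*} {m : ℕ} (x : α) (u : Fin m.succ.succ.succ.succ.succ.succ.succ → α) :
    vecCons x u 7 = vecHead (vecTail (vecTail (vecTail (vecTail (vecTail (vecTail u)))))) := rfl

def N : Fin 7 → Matrix (Fin 8) (Fin 8) ℤ :=
  ![!![0, -1, 0, 0, 0, 0, 0, 0;
     1, 0, 0, 0, 0, 0, 0, 0;
     0, 0, 0, -1, 0, 0, 0, 0;
     0, 0, 1, 0, 0, 0, 0, 0;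
     0, 0, 0, 0, 0, -1, 0, 0;
     0, 0, 0, 0, 1, 0, 0, 0;
     0, 0, 0, 0, 0, 0, 0, -1;
     0, 0, 0, 0, 0, 0, 1, 0],
  !![0, 0, -1, 0, 0, 0, 0, 0;
     0, 0, 0, 1, 0, 0, 0, 0;
     1, 0, 0, 0, 0, 0, 0, 0;
     0, -1, 0, 0, 0, 0, 0, 0;
     0, 0, 0, 0, 0, 0, -1, 0;
     0, 0, 0, 0, 0, 0, 0, 1;
     0, 0, 0, 0, 1, 0, 0, 0;
     0, 0, 0, 0, 0, -1, 0, 0],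
  !![0, 0, 0, -1, 0, 0, 0, 0;
     0, 0, -1, 0, 0, 0, 0, 0;
     0, 1, 0, 0, 0, 0, 0, 0;
     1, 0, 0, 0, 0, 0, 0, 0;
     0, 0, 0, 0, 0, 0, 0, 1;
     0, 0, 0, 0, 0, 0, 1, 0;
     0, 0, 0, 0, 0, -1, 0, 0;
     0, 0, 0, 0, -1, 0, 0, 0],
  !![0, 0, 0, 0, -1, 0, 0, 0;
     0, 0, 0, 0, 0, 1, 0, 0;
     0, 0, 0, 0, 0, 0, 1, 0;
     0, 0, 0, 0, 0, 0, 0, -1;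
     1, 0, 0, 0, 0, 0, 0, 0;
     0, -1, 0, 0, 0, 0, 0, 0;
     0, 0, -1, 0, 0, 0, 0, 0;
     0, 0, 0, 1, 0, 0, 0, 0],
  !![0, 0, 0, 0, 0, -1, 0, 0;
     0, 0, 0, 0, -1, 0, 0, 0;
     0, 0, 0, 0, 0, 0, 0, -1;
     0, 0, 0, 0, 0, 0, -1, 0;
     0, 1, 0, 0, 0, 0, 0, 0;
     1, 0, 0, 0, 0, 0, 0, 0;
     0, 0, 0, 1, 0, 0, 0, 0;
     0, 0, 1, 0, 0, 0, 0, 0],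
  !![0, 0, 0, 0, 0, 0, -1, 0;
     0, 0, 0, 0, 0, 0, 0, 1;
     0, 0, 0, 0, -1, 0, 0, 0;
     0, 0, 0, 0, 0, 1, 0, 0;
     0, 0, 1, 0, 0, 0, 0, 0;
     0, 0, 0, -1, 0, 0, 0, 0;
     1, 0, 0, 0, 0, 0, 0, 0;
     0, -1, 0, 0, 0, 0, 0, 0],
  !![0, 0, 0, 0, 0, 0, 0, -1;
     0, 0, 0, 0, 0, 0, -1, 0;
     0, 0, 0, 0, 0, 1, 0, 0;
     0, 0, 0, 0, 1, 0, 0, 0;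
     0, 0, 0, -1, 0, 0, 0, 0;
     0, 0, -1, 0, 0, 0, 0, 0;
     0, 1, 0, 0, 0, 0, 0, 0;
     1, 0, 0, 0, 0, 0, 0, 0]]

noncomputable def MR (i : Fin 7) : Matrix (Fin 8) (Fin 8) ℝ :=
  (N i).map (Int.castRingHom ℝ)

lemma N_sq : ∀ i : Fin 7, N i * N i = -1 := by decide
lemma N_skew : ∀ i : Fin 7, (N i)ᵀ = -(N i) := by decide

lemma MR_sq (i : Fin 7) : MR i * MR i = -1 := by
  unfold MR
  rw [← Matrix.map_mul, N_sq]
  ext j k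
  simp [Matrix.map_apply, Matrix.neg_apply, Matrix.one_apply]

lemma MR_skew (i : Fin 7) : (MR i)ᵀ = -(MR i) := by
  unfold MR
  rw [← Matrix.transpose_map, N_skew]
  ext j k
  simp [Matrix.map_apply, Matrix.neg_apply]

lemma skew_form (S : Matrix (Fin 8) (Fin 8) ℝ) (h : Sᵀ = -S) (p : Fin 8 → ℝ) :
    p ⬝ᵥ S.mulVec p = 0 := by
  have h1 : p ⬝ᵥ S.mulVec p = (p ᵥ* S) ⬝ᵥ p := Matrix.dotProduct_mulVec p S p
  have h2 : p ᵥ* S = Sᵀ.mulVec p := (Matrix.mulVec_transpose S p).symm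
  have h4 : p ⬝ᵥ S.mulVec p = -(p ⬝ᵥ S.mulVec p) := by
    conv_lhs => rw [h1, h2, h, Matrix.neg_mulVec, neg_dotProduct,
      dotProduct_comm]
  linarith

noncomputable def Lc (i : Fin 7) : EuclideanSpace ℝ (Fin 8) →L[ℝ] EuclideanSpace ℝ (Fin 8) :=
  LinearMap.toContinuousLinearMap
    { toFun := fun p => WithLp.toLp 2 ((MR i).mulVec p)
      map_add' := fun x y => by simp [Matrix.mulVec_add]
      map_smul' := fun c x => by simp [Matrix.mulVec_smul] }

lemma Lc_apply (i : Fin 7) (v : EuclideanSpace ℝ (Fin 8)) : Lc i v = WithLp.toLp 2 ((MR i).mulVec v) := by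
  simp only [Lc, LinearMap.coe_toContinuousLinearMap]
  rfl

lemma mv0 (p : Fin 8 → ℝ) : (MR 0).mulVec p = ![-p 1, p 0, -p 3, p 2, -p 5, p 4, -p 7, p 6] := by
  funext j
  fin_cases j <;>
    simp [MR, N, Matrix.map_apply, Matrix.mulVec, dotProduct, Fin.sum_univ_eight,
      cv5, cv6, cv7]

lemma mv1 (p : Fin 8 → ℝ) : (MR 1).mulVec p = ![-p 2, p 3, p 0, -p 1, -p 6, p 7, p 4, -p 5] := by
  funext j
  fin_cases j <;>
    simp [MR, N, Matrix.map_apply, Matrix.mulVec, dotProduct, Fin.sum_univ_eight,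
      cv5, cv6, cv7]

lemma mv2 (p : Fin 8 → ℝ) : (MR 2).mulVec p = ![-p 3, -p 2, p 1, p 0, p 7, p 6, -p 5, -p 4] := by
  funext j
  fin_cases j <;>
    simp [MR, N, Matrix.map_apply, Matrix.mulVec, dotProduct, Fin.sum_univ_eight,
      cv5, cv6, cv7]

lemma mv3 (p : Fin 8 → ℝ) : (MR 3).mulVec p = ![-p 4, p 5, p 6, -p 7, p 0, -p 1, -p 2, p 3] := by
  funext j
  fin_cases j <;>
    simp [MR, N, Matrix.map_apply, Matrix.mulVec, dotProduct, Fin.sum_univ_eight,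
      cv5, cv6, cv7]

lemma mv4 (p : Fin 8 → ℝ) : (MR 4).mulVec p = ![-p 5, -p 4, -p 7, -p 6, p 1, p 0, p 3, p 2] := by
  funext j
  fin_cases j <;>
    simp [MR, N, Matrix.map_apply, Matrix.mulVec, dotProduct, Fin.sum_univ_eight,
      cv5, cv6, cv7]

lemma mv5 (p : Fin 8 → ℝ) : (MR 5).mulVec p = ![-p 6, p 7, -p 4, p 5, p 2, -p 3, p 0, -p 1] := by
  funext j
  fin_cases j <;>
    simp [MR, N, Matrix.map_apply, Matrix.mulVec, dotProduct, Fin.sum_univ_eight,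
      cv5, cv6, cv7]

lemma mv6 (p : Fin 8 → ℝ) : (MR 6).mulVec p = ![-p 7, -p 6, p 5, p 4, -p 3, -p 2, p 1, p 0] := by
  funext j
  fin_cases j <;>
    simp [MR, N, Matrix.map_apply, Matrix.mulVec, dotProduct, Fin.sum_univ_eight,
      cv5, cv6, cv7]

lemma inner_eq_dot (x y : EuclideanSpace ℝ (Fin 8)) :
    (inner ℝ x y : ℝ) = (x : Fin 8 → ℝ) ⬝ᵥ (y : Fin 8 → ℝ) := by
  simp [PiLp.inner_apply, RCLike.inner_apply, starRingEnd_apply, dotProduct, mul_comm]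




/-- For the octonionic frame `X₁,…,X₇` on `S⁷` one has `⟨X_b(p), [X_a, X_b](p)⟩ = 0` for all
`a ∈ {2,…,7}` (i.e. `a ≠ 0` in the indexing `X 0 = X₁, …, X 6 = X₇`), all `b ∈ {1,…,7}` and
all `p ∈ S⁷`, where `[f,g](p) = Dg_p(f(p)) − Df_p(g(p))` is the Lie bracket of vector
fields on `ℝ⁸`. -/
theorem s7_frame_bracket_orthogonality
    (X : Fin 7 → EuclideanSpace ℝ (Fin 8) → EuclideanSpace ℝ (Fin 8))
    (hX : ∀ p : EuclideanSpace ℝ (Fin 8),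
      X 0 p = ![-p 1, p 0, -p 3, p 2, -p 5, p 4, -p 7, p 6] ∧
      X 1 p = ![-p 2, p 3, p 0, -p 1, -p 6, p 7, p 4, -p 5] ∧
      X 2 p = ![-p 3, -p 2, p 1, p 0, p 7, p 6, -p 5, -p 4] ∧
      X 3 p = ![-p 4, p 5, p 6, -p 7, p 0, -p 1, -p 2, p 3] ∧
      X 4 p = ![-p 5, -p 4, -p 7, -p 6, p 1, p 0, p 3, p 2] ∧
      X 5 p = ![-p 6, p 7, -p 4, p 5, p 2, -p 3, p 0, -p 1] ∧
      X 6 p = ![-p 7, -p 6, p 5, p 4, -p 3, -p 2, p 1, p 0])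
    (bracket :
      (EuclideanSpace ℝ (Fin 8) → EuclideanSpace ℝ (Fin 8)) →
      (EuclideanSpace ℝ (Fin 8) → EuclideanSpace ℝ (Fin 8)) →
      (EuclideanSpace ℝ (Fin 8) → EuclideanSpace ℝ (Fin 8)))
    (hbr : ∀ f g p, bracket f g p = fderiv ℝ g p (f p) - fderiv ℝ f p (g p)) :
    ∀ a b : Fin 7, a ≠ 0 → ∀ p : EuclideanSpace ℝ (Fin 8), ‖p‖ = 1 →
      (inner ℝ (X b p) (bracket (X a) (X b) p) : ℝ) = 0 := by

  intro a b ha p hp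
  have hXe : ∀ i : Fin 7, X i = fun q : EuclideanSpace ℝ (Fin 8) => WithLp.toLp 2 ((MR i).mulVec q) := by
    intro i
    funext q
    obtain ⟨h0, h1, h2, h3, h4, h5, h6⟩ := hX q
    fin_cases i
    · show X 0 q = WithLp.toLp 2 ((MR 0).mulVec q)
      rw [← WithLp.toLp_ofLp (x := X 0 q), h0, mv0]
    · show X 1 q = WithLp.toLp 2 ((MR 1).mulVec q)
      rw [← WithLp.toLp_ofLp (x := X 1 q), h1, mv1]
    · show X 2 q = WithLp.toLp 2 ((MR 2).mulVec q)
      rw [← WithLp.toLp_ofLp (x := X 2 q), h2, mv2]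
    · show X 3 q = WithLp.toLp 2 ((MR 3).mulVec q)
      rw [← WithLp.toLp_ofLp (x := X 3 q), h3, mv3]
    · show X 4 q = WithLp.toLp 2 ((MR 4).mulVec q)
      rw [← WithLp.toLp_ofLp (x := X 4 q), h4, mv4]
    · show X 5 q = WithLp.toLp 2 ((MR 5).mulVec q)
      rw [← WithLp.toLp_ofLp (x := X 5 q), h5, mv5]
    · show X 6 q = WithLp.toLp 2 ((MR 6).mulVec q)
      rw [← WithLp.toLp_ofLp (x := X 6 q), h6, mv6]
  have hL : ∀ i : Fin 7, X i = ⇑(Lc i) := by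
    intro i
    rw [hXe i]
    funext q
    exact (Lc_apply i q).symm
  have hfd : ∀ (i : Fin 7) (q : EuclideanSpace ℝ (Fin 8)), fderiv ℝ (X i) q = Lc i := by
    intro i q
    rw [hL i]
    exact (Lc i).fderiv
  rw [hbr]
  rw [hfd a p, hfd b p]
  have e1 : (Lc b) (X a p) = WithLp.toLp 2 ((MR b * MR a).mulVec p) := by
    rw [hXe a]
    rw [Lc_apply, WithLp.ofLp_toLp, Matrix.mulVec_mulVec]
  have e2 : (Lc a) (X b p) = WithLp.toLp 2 ((MR a * MR b).mulVec p) := by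
    rw [hXe b]
    rw [Lc_apply, WithLp.ofLp_toLp, Matrix.mulVec_mulVec]
  rw [e1, e2]
  set A := MR a with hA
  set B := MR b with hB
  set C : Matrix (Fin 8) (Fin 8) ℝ := B * A - A * B with hC
  have hXbp : X b p = WithLp.toLp 2 (B.mulVec p) := by rw [hXe b]
  have hsub : WithLp.toLp 2 ((B * A).mulVec p) - WithLp.toLp 2 ((A * B).mulVec p) = WithLp.toLp 2 (C.mulVec p) := by
    rw [hC, Matrix.sub_mulVec, WithLp.toLp_sub]
  have hgoal : (inner ℝ (X b p) (WithLp.toLp 2 ((B * A).mulVec p) - WithLp.toLp 2 ((A * B).mulVec p) : EuclideanSpace ℝ (Fin 8)) : ℝ)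
      = (B.mulVec p) ⬝ᵥ (C.mulVec p) := by
    rw [inner_eq_dot, hXbp, hsub, WithLp.ofLp_toLp, WithLp.ofLp_toLp]
  rw [hgoal]
  -- move to quadratic form of S := Bᵀ * C
  have step : (B.mulVec p) ⬝ᵥ (C.mulVec p) = p ⬝ᵥ ((Bᵀ * C).mulVec p) := by
    rw [← Matrix.mulVec_mulVec]
    have : B.mulVec p = p ᵥ* Bᵀ := by
      rw [← Matrix.mulVec_transpose, Matrix.transpose_transpose]
    rw [this, ← Matrix.dotProduct_mulVec]
  rw [step]
  apply skew_form
  -- show (Bᵀ * C)ᵀ = -(Bᵀ * C)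
  have hB2 : B * B = -1 := MR_sq b
  have hBt : Bᵀ = -B := MR_skew b
  have hAt : Aᵀ = -A := MR_skew a
  have hCt : Cᵀ = -C := by
    rw [hC, Matrix.transpose_sub, Matrix.transpose_mul, Matrix.transpose_mul, hAt, hBt]
    noncomm_ring
  have anti : C * B + B * C = 0 := by
    have h1 : C * B + B * C = (B * B) * A - A * (B * B) := by rw [hC]; noncomm_ring
    rw [h1, hB2]
    noncomm_ring
  rw [Matrix.transpose_mul, Matrix.transpose_transpose, hCt]
  -- goal : (-C) * B = -(Bᵀ * C)
  rw [hBt]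
  -- goal : (-C) * B = -((-B) * C)
  have hcb : C * B = -(B * C) := by
    have := anti
    linear_combination (norm := noncomm_ring) this
  rw [Matrix.neg_mul, hcb]
  noncomm_ring
end
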